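/- arXiv:2209.09527 — 9 statements merged into one kernel-verified Lean document; each statement's English description precedes it below -/
import Mathlib

section
/- Let Q be a set, let V1, V2 be disjoint finite sets of nodes, and let F1 : (V1 → Q) → (V1 → Q), F2 : (V2 → Q) → (V2 → Q) be automata networks. Let C be a finite set disjoint from V1 ∪ V2, partitioned as C = C1 ⊔ C2, let φ1 : C → V1 and φ2 : C → V2 be injective, and let F' be the glueing of F1 and F2 over C (with this data). Let X ⊆ V1 ∖ φ1(C) and Y ⊆ V2 ∖ φ2(C). Suppose (x^t)_{0 ≤ t ≤ T} is an (X ∪ φ1(C2))-pseudo-orbit of F1, (y^t)_{0 ≤ t ≤ T} is a (Y ∪ φ2(C1))-pseudo-orbit of F2, and for all 0 ≤ t ≤ T and all v ∈ C one has x^t_{φ1(v)} = y^t_{φ2(v)}. Define configurations z^t on V' by z^t_v = x^t_{α(v)} if α(v) ∈ V1 and z^t_v = y^t_{α(v)} if α(v) ∈ V2. Then (z^t)_{0 ≤ t ≤ T} is an (X ∪ Y)-pseudo-orbit of F'. -/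
/-- **Pseudo-orbit glueing** (Lemma `pseudo-orbit-glueing`).
Automata networks are modelled as maps on total configurations `U → Q`, where an
automata network on node set `V ⊆ U` only depends on (and is only read at) nodes of `V`
(hypotheses `hF1loc`, `hF2loc`).  The glueing `F'` of `F1` and `F2` over `C = C1 ∪ C2`,
together with the maps `α` and `ρ1, ρ2`, is characterized by the hypotheses below,
following the paper's Definition of glueing.  If `(x^t)` is an `(X ∪ φ1(C2))`-pseudo-orbit
of `F1`, `(y^t)` is a `(Y ∪ φ2(C1))`-pseudo-orbit of `F2`, and they agree on the dowel `C`,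
then the combined sequence `(z^t)` is an `(X ∪ Y)`-pseudo-orbit of `F'`. -/
theorem glueing_pseudo_orbit {U Q : Type*}
    (V1 V2 C1 C2 : Set U)
    (hV12 : Disjoint V1 V2)
    (hCV1 : Disjoint (C1 ∪ C2) V1) (hCV2 : Disjoint (C1 ∪ C2) V2)
    (hC12 : Disjoint C1 C2)
    (F1 F2 F' : (U → Q) → (U → Q))
    (hF1loc : ∀ x y : U → Q, (∀ v ∈ V1, x v = y v) → ∀ v ∈ V1, F1 x v = F1 y v)
    (hF2loc : ∀ x y : U → Q, (∀ v ∈ V2, x v = y v) → ∀ v ∈ V2, F2 x v = F2 y v)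
    (φ1 φ2 : U → U)
    (hφ1inj : Set.InjOn φ1 (C1 ∪ C2)) (hφ2inj : Set.InjOn φ2 (C1 ∪ C2))
    (hφ1maps : Set.MapsTo φ1 (C1 ∪ C2) V1) (hφ2maps : Set.MapsTo φ2 (C1 ∪ C2) V2)
    (V' : Set U)
    (hV' : V' = (C1 ∪ C2) ∪ (V1 \ φ1 '' (C1 ∪ C2)) ∪ (V2 \ φ2 '' (C1 ∪ C2)))
    (α : U → U)
    (hα1 : ∀ v ∈ C1, α v = φ1 v) (hα2 : ∀ v ∈ C2, α v = φ2 v)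
    (hα3 : ∀ v, v ∉ C1 ∪ C2 → α v = v)
    (ρ1 ρ2 : (U → Q) → (U → Q))
    (hρ1C : ∀ (x : U → Q), ∀ c ∈ C1 ∪ C2, ρ1 x (φ1 c) = x c)
    (hρ1o : ∀ (x : U → Q), ∀ v, v ∉ φ1 '' (C1 ∪ C2) → ρ1 x v = x v)
    (hρ2C : ∀ (x : U → Q), ∀ c ∈ C1 ∪ C2, ρ2 x (φ2 c) = x c)
    (hρ2o : ∀ (x : U → Q), ∀ v, v ∉ φ2 '' (C1 ∪ C2) → ρ2 x v = x v)
    (hF'1 : ∀ (x : U → Q), ∀ v ∈ V', α v ∈ V1 → F' x v = F1 (ρ1 x) (α v))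
    (hF'2 : ∀ (x : U → Q), ∀ v ∈ V', α v ∈ V2 → F' x v = F2 (ρ2 x) (α v))
    (X Y : Set U)
    (hX : X ⊆ V1 \ φ1 '' (C1 ∪ C2)) (hY : Y ⊆ V2 \ φ2 '' (C1 ∪ C2))
    (T : ℕ) (x y : ℕ → U → Q)
    (hx : ∀ t < T, ∀ v ∈ V1, v ∉ X ∪ φ1 '' C2 → x (t + 1) v = F1 (x t) v)
    (hy : ∀ t < T, ∀ v ∈ V2, v ∉ Y ∪ φ2 '' C1 → y (t + 1) v = F2 (y t) v)
    (hxy : ∀ t ≤ T, ∀ v ∈ C1 ∪ C2, x t (φ1 v) = y t (φ2 v))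
    (z : ℕ → U → Q)
    (hz1 : ∀ t ≤ T, ∀ v ∈ V', α v ∈ V1 → z t v = x t (α v))
    (hz2 : ∀ t ≤ T, ∀ v ∈ V', α v ∈ V2 → z t v = y t (α v)) :
    ∀ t < T, ∀ v ∈ V', v ∉ X ∪ Y → z (t + 1) v = F' (z t) v := by
  -- key: ρ1 (z t) agrees with x t on V1
  have key1 : ∀ t ≤ T, ∀ w ∈ V1, ρ1 (z t) w = x t w := by
    intro t ht w hw
    by_cases hw' : w ∈ φ1 '' (C1 ∪ C2)
    · obtain ⟨c, hc, rfl⟩ := hw'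
      rw [hρ1C _ _ hc]
      have hcV' : c ∈ V' := by rw [hV']; exact Or.inl (Or.inl hc)
      rcases hc with hc1 | hc2
      · rw [hz1 t ht c hcV' (by rw [hα1 c hc1]; exact hφ1maps (Or.inl hc1)), hα1 c hc1]
      · rw [hz2 t ht c hcV' (by rw [hα2 c hc2]; exact hφ2maps (Or.inr hc2)), hα2 c hc2,
          ← hxy t ht c (Or.inr hc2)]
    · rw [hρ1o _ _ hw']
      have hwC : w ∉ C1 ∪ C2 := fun h => Set.disjoint_left.mp hCV1 h hw
      have hwV' : w ∈ V' := by rw [hV']; exact Or.inl (Or.inr ⟨hw, hw'⟩)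
      rw [hz1 t ht w hwV' (by rw [hα3 w hwC]; exact hw), hα3 w hwC]
  have key2 : ∀ t ≤ T, ∀ w ∈ V2, ρ2 (z t) w = y t w := by
    intro t ht w hw
    by_cases hw' : w ∈ φ2 '' (C1 ∪ C2)
    · obtain ⟨c, hc, rfl⟩ := hw'
      rw [hρ2C _ _ hc]
      have hcV' : c ∈ V' := by rw [hV']; exact Or.inl (Or.inl hc)
      rcases hc with hc1 | hc2
      · rw [hz1 t ht c hcV' (by rw [hα1 c hc1]; exact hφ1maps (Or.inl hc1)), hα1 c hc1,
          hxy t ht c (Or.inl hc1)]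
      · rw [hz2 t ht c hcV' (by rw [hα2 c hc2]; exact hφ2maps (Or.inr hc2)), hα2 c hc2]
    · rw [hρ2o _ _ hw']
      have hwC : w ∉ C1 ∪ C2 := fun h => Set.disjoint_left.mp hCV2 h hw
      have hwV' : w ∈ V' := by rw [hV']; exact Or.inr ⟨hw, hw'⟩
      rw [hz2 t ht w hwV' (by rw [hα3 w hwC]; exact hw), hα3 w hwC]
  intro t ht v hv hvXY
  have ht' : t ≤ T := ht.le
  have ht1 : t + 1 ≤ T := ht
  have hvE : v ∈ (C1 ∪ C2) ∪ (V1 \ φ1 '' (C1 ∪ C2)) ∪ (V2 \ φ2 '' (C1 ∪ C2)) := by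
    rwa [hV'] at hv
  rcases hvE with (hC | h1) | h2
  · rcases hC with h1 | h2
    · -- v ∈ C1, α v = φ1 v ∈ V1
      have hα : α v = φ1 v := hα1 v h1
      have hαV1 : α v ∈ V1 := by rw [hα]; exact hφ1maps (Or.inl h1)
      rw [hF'1 (z t) v hv hαV1, hz1 (t + 1) ht1 v hv hαV1, hα]
      have hnot : φ1 v ∉ X ∪ φ1 '' C2 := by
        rintro (hX' | ⟨c, hc, heq⟩)
        · exact (hX hX').2 ⟨v, Or.inl h1, rfl⟩
        · have : c = v := hφ1inj (Or.inr hc) (Or.inl h1) heq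
          exact Set.disjoint_left.mp hC12 h1 (this ▸ hc)
      rw [hx t ht (φ1 v) (hφ1maps (Or.inl h1)) hnot]
      exact hF1loc (x t) (ρ1 (z t)) (fun w hw => (key1 t ht' w hw).symm) (φ1 v)
        (hφ1maps (Or.inl h1))
    · -- v ∈ C2, α v = φ2 v ∈ V2
      have hα : α v = φ2 v := hα2 v h2
      have hαV2 : α v ∈ V2 := by rw [hα]; exact hφ2maps (Or.inr h2)
      rw [hF'2 (z t) v hv hαV2, hz2 (t + 1) ht1 v hv hαV2, hα]
      have hnot : φ2 v ∉ Y ∪ φ2 '' C1 := by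
        rintro (hY' | ⟨c, hc, heq⟩)
        · exact (hY hY').2 ⟨v, Or.inr h2, rfl⟩
        · have : c = v := hφ2inj (Or.inl hc) (Or.inr h2) heq
          exact Set.disjoint_left.mp hC12 (this ▸ hc) h2
      rw [hy t ht (φ2 v) (hφ2maps (Or.inr h2)) hnot]
      exact hF2loc (y t) (ρ2 (z t)) (fun w hw => (key2 t ht' w hw).symm) (φ2 v)
        (hφ2maps (Or.inr h2))
  · -- v ∈ V1 \ φ1 '' C
    have hvC : v ∉ C1 ∪ C2 := fun h => Set.disjoint_left.mp hCV1 h h1.1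
    have hα : α v = v := hα3 v hvC
    have hαV1 : α v ∈ V1 := by rw [hα]; exact h1.1
    rw [hF'1 (z t) v hv hαV1, hz1 (t + 1) ht1 v hv hαV1, hα]
    have hnot : v ∉ X ∪ φ1 '' C2 := by
      rintro (hX' | ⟨c, hc, heq⟩)
      · exact hvXY (Or.inl hX')
      · exact h1.2 ⟨c, Or.inr hc, heq⟩
    rw [hx t ht v h1.1 hnot]
    exact hF1loc (x t) (ρ1 (z t)) (fun w hw => (key1 t ht' w hw).symm) v h1.1
  · -- v ∈ V2 \ φ2 '' C
    have hvC : v ∉ C1 ∪ C2 := fun h => Set.disjoint_left.mp hCV2 h h2.1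
    have hα : α v = v := hα3 v hvC
    have hαV2 : α v ∈ V2 := by rw [hα]; exact h2.1
    rw [hF'2 (z t) v hv hαV2, hz2 (t + 1) ht1 v hv hαV2, hα]
    have hnot : v ∉ Y ∪ φ2 '' C1 := by
      rintro (hY' | ⟨c, hc, heq⟩)
      · exact hvXY (Or.inr hY')
      · exact h2.2 ⟨c, Or.inl hc, heq⟩
    rw [hy t ht v h2.1 hnot]
    exact hF2loc (y t) (ρ2 (z t)) (fun w hw => (key2 t ht' w hw).symm) v h2.1
end

section
/- Let F be an automata network over a finite alphabet Q_F on a finite node set V_F and G an automata network over a finite alphabet Q_G on a finite node set V_G, and suppose G simulates F via a block embedding φ with time constant T ≥ 1. Then for every configuration x of F, the transients satisfy τ_G(φ(x)) ≤ T·τ_F(x) and T·τ_F(x) < τ_G(φ(x)) + T, where τ_F(x) is the transient of x under F and τ_G(φ(x)) is the transient of φ(x) under G. -/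
/-- A block embedding of `V_F → Q_F` into `V_G → Q_G` (paper's Definition of block
simulation).  The blocks are the fibers `D_i = blk⁻¹ {i}` of a surjective map
`blk : V_G → V_F` (so they are pairwise disjoint, cover `V_G`, and there is one block
for each node of `F`), and `pat i q` records the pattern `p_{i,q}` (its values outside
the block `D_i` are irrelevant).  Injectivity of `q ↦ p_{i,q}` is `pat_inj`. -/
structure BlockEmbedding (QF QG VF VG : Type*) where
  blk : VG → VF
  blk_surj : Function.Surjective blk
  pat : VF → QF → VG → QG
  pat_inj : ∀ i q q', (∀ w, blk w = i → pat i q w = pat i q' w) → q = q'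

/-- The injective map `φ : (V_F → Q_F) → (V_G → Q_G)` induced by a block embedding:
`φ(x)` restricted to the block `D_i` equals the pattern `p_{i, x_i}`. -/
def BlockEmbedding.toFun {QF QG VF VG : Type*} (B : BlockEmbedding QF QG VF VG)
    (x : VF → QF) : VG → QG :=
  fun w => B.pat (B.blk w) (x (B.blk w)) w

/-- The transient of a configuration `x` under `F`: the least `t ≥ 0` such that
`F^t(x)` is a periodic point of `F`. -/
noncomputable def transient {Q V : Type*} (F : (V → Q) → (V → Q)) (x : V → Q) : ℕ :=
  sInf {t | F^[t] x ∈ Function.periodicPts F}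


lemma BlockEmbedding.toFun_injective {QF QG VF VG : Type*} (B : BlockEmbedding QF QG VF VG) :
    Function.Injective B.toFun := by
  intro x y h
  funext i
  apply B.pat_inj i
  intro w hw
  have := congrFun h w
  simpa [BlockEmbedding.toFun, hw] using this

lemma transient_set_nonempty {Q V : Type*} [Finite Q] [Finite V]
    (f : (V → Q) → (V → Q)) (y : V → Q) :
    {t | f^[t] y ∈ Function.periodicPts f}.Nonempty := by
  obtain ⟨m, n, hmn, heq⟩ := Finite.exists_ne_map_eq_of_infinite (fun n : ℕ => f^[n] y)
  rcases hmn.lt_or_gt with h | h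
  · refine ⟨m, Function.mem_periodicPts.mpr ⟨n - m, by omega, ?_⟩⟩
    show f^[n-m] (f^[m] y) = f^[m] y
    rw [← Function.iterate_add_apply]
    simpa [Nat.sub_add_cancel h.le] using heq.symm
  · refine ⟨n, Function.mem_periodicPts.mpr ⟨m - n, by omega, ?_⟩⟩
    show f^[m-n] (f^[n] y) = f^[n] y
    rw [← Function.iterate_add_apply]
    simpa [Nat.sub_add_cancel h.le] using heq


/-- If `G` simulates `F` via a block embedding `φ` with time constant `T ≥ 1`
(alphabets and node sets finite), then the transients satisfy
`τ_G(φ(x)) ≤ T·τ_F(x)` and `T·τ_F(x) < τ_G(φ(x)) + T`. -/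
theorem simulation_transient {QF QG VF VG : Type*}
    [Finite QF] [Finite QG] [Finite VF] [Finite VG]
    (F : (VF → QF) → (VF → QF)) (G : (VG → QG) → (VG → QG))
    (B : BlockEmbedding QF QG VF VG) (T : ℕ) (hT : 1 ≤ T)
    (hsim : ∀ x, B.toFun (F x) = G^[T] (B.toFun x)) (x : VF → QF) :
    transient G (B.toFun x) ≤ T * transient F x ∧
      T * transient F x < transient G (B.toFun x) + T := by

  have hinj := B.toFun_injective
  have hiter : ∀ n y, B.toFun (F^[n] y) = G^[T*n] (B.toFun y) := by
    intro n
    induction n with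
    | zero => simp
    | succ n ih =>
      intro y
      rw [Function.iterate_succ_apply', hsim, ih, ← Function.iterate_add_apply]
      congr 1
      ring
  set t := transient F x with ht
  set s := transient G (B.toFun x) with hs
  have htmem : F^[t] x ∈ Function.periodicPts F := Nat.sInf_mem (transient_set_nonempty F x)
  obtain ⟨p, hp, hpp⟩ := Function.mem_periodicPts.mp htmem
  have h1 : s ≤ T * t := by
    apply Nat.sInf_le
    show G^[T*t] (B.toFun x) ∈ Function.periodicPts G
    rw [← hiter]
    refine Function.mem_periodicPts.mpr ⟨T*p, by positivity, ?_⟩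
    show G^[T*p] (B.toFun (F^[t] x)) = B.toFun (F^[t] x)
    rw [← hiter, show F^[p] (F^[t] x) = F^[t] x from hpp]
  refine ⟨h1, ?_⟩
  set n := (s + T - 1) / T with hn
  have hdm : T * n + (s + T - 1) % T = s + T - 1 := by
    rw [hn]; exact Nat.div_add_mod _ _
  have hmod := Nat.mod_lt (s + T - 1) (show 0 < T by omega)
  have hsn : s ≤ T * n := by omega
  have hnb : T * n ≤ s + T - 1 := by omega
  have hsmem : G^[s] (B.toFun x) ∈ Function.periodicPts G :=
    Nat.sInf_mem (transient_set_nonempty G (B.toFun x))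
  have hTnmem : G^[T*n] (B.toFun x) ∈ Function.periodicPts G := by
    have heq : T*n = (T*n - s) + s := by omega
    rw [heq, Function.iterate_add_apply]
    obtain ⟨m, hm, hmp⟩ := Function.mem_periodicPts.mp hsmem
    exact Function.mem_periodicPts.mpr ⟨m, hm, hmp.apply_iterate _⟩
  obtain ⟨p', hp', hpp'⟩ := Function.mem_periodicPts.mp hTnmem
  have hper : B.toFun (F^[n+p'] x) = B.toFun (F^[n] x) := by
    rw [hiter, hiter, show T*(n+p') = p' * T + T*n by ring, Function.iterate_add_apply]
    exact (hpp'.mul_const T).eq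
  have hFn : F^[n] x ∈ Function.periodicPts F := by
    refine Function.mem_periodicPts.mpr ⟨p', hp', ?_⟩
    show F^[p'] (F^[n] x) = F^[n] x
    rw [← Function.iterate_add_apply, Nat.add_comm]
    exact hinj hper
  have ht_le : t ≤ n := Nat.sInf_le hFn
  have := Nat.mul_le_mul_left T ht_le
  omega
end

section
/- Let V be a finite set, r : V → V → Prop a directed-edge relation on V, and let F : (V → Bool) → (V → Bool) be the associated conjunctive network: F(x)_v = true if and only if x_u = true for every u with r(u, v). Let x be a configuration lying on a periodic orbit, i.e. F^P(x) = x for some P ≥ 1, and let v ∈ V be a vertex admitting a closed walk of length L ≥ 1 from v to v (a sequence v = w_0, w_1, …, w_L = v with r(w_j, w_{j+1}) for all 0 ≤ j < L). Then F^L(x)_v = x_v. -/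
/-- **Stability along closed walks in conjunctive networks.**
Let `F` be the conjunctive network of a directed-edge relation `r` on a finite set `V`
(`F(x)_v = true` iff `x_u = true` for every in-neighbour `u` of `v`).  If `x` lies on a
periodic orbit (`F^P(x) = x` for some `P ≥ 1`) and `v` admits a closed walk of length
`L ≥ 1` from `v` to `v`, then `F^L(x)_v = x_v`. -/
theorem conjunctive_closed_walk_stable {V : Type*} [Finite V]
    (r : V → V → Prop) (F : (V → Bool) → (V → Bool))
    (hF : ∀ (x : V → Bool) (v : V), F x v = true ↔ ∀ u, r u v → x u = true)
    (x : V → Bool) (P : ℕ) (hP : 1 ≤ P) (hx : F^[P] x = x)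
    (v : V) (L : ℕ) (hL : 1 ≤ L)
    (w : ℕ → V) (hw0 : w 0 = v) (hwL : w L = v)
    (hstep : ∀ j < L, r (w j) (w (j + 1))) :
    F^[L] x v = x v := by
  have lemA : ∀ (y : V → Bool), F^[L] y v = true → y v = true := by
    intro y h
    have key : ∀ k ≤ L, F^[k] y (w k) = true → y (w 0) = true := by
      intro k
      induction k with
      | zero => intro _ h0; simpa using h0
      | succ k ih =>
        intro hk h1
        apply ih (Nat.le_of_succ_le hk)
        have h2 := (hF (F^[k] y) (w (k + 1))).mp
          (by rwa [Function.iterate_succ_apply'] at h1)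
        exact h2 (w k) (hstep k (Nat.lt_of_succ_le hk))
    have := key L le_rfl (by rwa [hwL])
    rwa [hw0] at this
  have hdec : ∀ k : ℕ, F^[(k + 1) * L] x v = true → F^[k * L] x v = true := by
    intro k h
    apply lemA
    rw [← Function.iterate_add_apply]
    rwa [show L + k * L = (k + 1) * L by ring]
  have hmono : ∀ m k, F^[(k + m) * L] x v = true → F^[k * L] x v = true := by
    intro m
    induction m with
    | zero => intro k h; simpa using h
    | succ m ih =>
      intro k h
      exact hdec k (ih (k + 1) (by rwa [show (k + 1 + m) * L = (k + (m + 1)) * L by ring]))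
  cases hxv : x v with
  | false =>
    cases hFL : F^[L] x v with
    | false => rfl
    | true =>
      have h0 := hdec 0 (by simpa using hFL)
      simp only [Nat.zero_mul, Function.iterate_zero_apply] at h0
      rw [h0] at hxv
      exact hxv
  | true =>
    have hPfix : F^[P * L] x v = true := by
      rw [Function.iterate_mul, Function.iterate_fixed hx]
      exact hxv
    have h1 : F^[1 * L] x v = true := by
      apply hmono (P - 1) 1
      rwa [show 1 + (P - 1) = P by omega]
    simpa using h1
end

section
/- Let F be a G_t-network on a finite node set V (with alphabet {0,1,2}, determined by a gate assignment g as in the context) and let F* be its associated Boolean conjunctive network. Let x : V → {0,1,2} and x* : V → {0,1} be configurations such that for every v ∈ V, if x_v ∈ {0,1} then x*_v = x_v. Then for every v ∈ V, if F(x)_v ∈ {0,1} then F*(x*)_v = F(x)_v. -/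
/-- The gates of a `G_t`-network: each node is assigned either `AND_{0,1}`, `AND_2`
or `Λ` with two designated input nodes, or `Id` with one designated input node. -/
inductive GtGate (V : Type*) where
  | and01 : V → V → GtGate V
  | and2  : V → V → GtGate V
  | lam   : V → V → GtGate V
  | id    : V → GtGate V

/-- Semantics of the gates over the alphabet `{0,1,2}` (as `Fin 3`):
`AND_{0,1}(a,b) = 2` if `2 ∈ {a,b}`, else `1` if `a = b = 1`, else `0`;
`AND_2(a,b) = 2` if `2 ∈ {a,b}` or `a = b = 1`, else `0`;
`Λ(a,b) = 2` if `2 ∈ {a,b}`, else `a`; `Id(a) = a`. -/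
def GtGate.eval {V : Type*} : GtGate V → (V → Fin 3) → Fin 3
  | .and01 u w, x => if x u = 2 ∨ x w = 2 then 2 else if x u = 1 ∧ x w = 1 then 1 else 0
  | .and2 u w, x => if x u = 2 ∨ x w = 2 ∨ (x u = 1 ∧ x w = 1) then 2 else 0
  | .lam u w, x => if x u = 2 ∨ x w = 2 then 2 else x u
  | .id u, x => x u

/-- The `G_t`-network determined by a gate assignment `g`. -/
def gtNet {V : Type*} (g : V → GtGate V) : (V → Fin 3) → V → Fin 3 :=
  fun x v => (g v).eval x

/-- Boolean semantics of the gates for the associated conjunctive network. -/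
def GtGate.evalBool {V : Type*} : GtGate V → (V → Bool) → Bool
  | .and01 u w, y => y u && y w
  | .and2 u w, y => y u && y w
  | .lam u _, y => y u
  | .id u, y => y u

/-- The Boolean conjunctive network associated to a `G_t`-network. -/
def gtConj {V : Type*} (g : V → GtGate V) : (V → Bool) → V → Bool :=
  fun y v => (g v).evalBool y

/-- **`G_t`-networks project onto their conjunctive networks** (paper's Lemma
`superconjunctive`).  Encoding Booleans into `{0,1} ⊆ {0,1,2}` by `true ↦ 1`,
`false ↦ 0`: if `x` and `x*` agree on all nodes where `x` is not in state `2`, then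
after one step `F(x)` and `F*(x*)` agree on all nodes where `F(x)` is not in state `2`. -/
theorem gt_conj_agreement {V : Type*} [Finite V] (g : V → GtGate V)
    (x : V → Fin 3) (xs : V → Bool)
    (h : ∀ v, x v ≠ 2 → x v = if xs v then 1 else 0) :
    ∀ v, gtNet g x v ≠ 2 → gtNet g x v = if gtConj g xs v then 1 else 0 := by
  have h' : ∀ u, x u = 2 ∨ x u = (if xs u then 1 else 0) := by
    intro u
    by_cases hu : x u = 2
    · exact Or.inl hu
    · exact Or.inr (h u hu)
  intro v
  cases hg : g v <;>
    simp only [gtNet, gtConj, hg, GtGate.eval, GtGate.evalBool] <;> intro hne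
  case and01 u w =>
    rcases h' u with hu | hu <;> rcases h' w with hw | hw <;>
      cases hxu : xs u <;> cases hxw : xs w <;> simp_all
  case and2 u w =>
    rcases h' u with hu | hu <;> rcases h' w with hw | hw <;>
      cases hxu : xs u <;> cases hxw : xs w <;> simp_all
  case lam u w =>
    rcases h' u with hu | hu <;> rcases h' w with hw | hw <;>
      cases hxu : xs u <;> cases hxw : xs w <;> simp_all
  case id u =>
    rcases h' u with hu | hu <;> cases hxu : xs u <;> simp_all
end

section
/- Let F be a G_t-network on a finite node set V with alphabet {0,1,2} (determined by a gate assignment g as in the context), and let r be its dependency relation: r(u, v) holds if and only if u is one of the designated input nodes of the gate at v (both inputs for AND_{0,1}, AND_2 and Λ gates, the single input for Id gates). Let x be a configuration with F^P(x) = x for some P ≥ 1, and let v ∈ V admit a closed walk of length L ≥ 1 from v to v with respect to r. Then x_v = 2 if and only if F^L(x)_v = 2. -/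
/-- The dependency relation of a `G_t`-network: `gtDep g u v` holds iff `u` is one of
the designated input nodes of the gate at `v`. -/
def gtDep {V : Type*} (g : V → GtGate V) (u v : V) : Prop :=
  match g v with
  | .and01 a b => u = a ∨ u = b
  | .and2 a b => u = a ∨ u = b
  | .lam a b => u = a ∨ u = b
  | .id a => u = a

lemma gt_step_two {V : Type*} (g : V → GtGate V) (y : V → Fin 3) {u v : V}
    (h : gtDep g u v) (hy : y u = 2) : gtNet g y v = 2 := by
  unfold gtDep at h
  unfold gtNet
  cases hg : g v <;> rw [hg] at h <;>
    first
    | (rcases h with h | h <;> subst h <;> simp [GtGate.eval, hy])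
    | (subst h; simp [GtGate.eval, hy])

lemma gt_fwd {V : Type*} (g : V → GtGate V) (v : V) (L : ℕ)
    (w : ℕ → V) (hw0 : w 0 = v) (hwL : w L = v)
    (hstep : ∀ j < L, gtDep g (w j) (w (j + 1)))
    (y : V → Fin 3) (hy : y v = 2) : (gtNet g)^[L] y v = 2 := by
  have key : ∀ j ≤ L, (gtNet g)^[j] y (w j) = 2 := by
    intro j hj
    induction j with
    | zero => simpa [hw0] using hy
    | succ n ih =>
      rw [Function.iterate_succ_apply']
      exact gt_step_two g _ (hstep n (by omega)) (ih (by omega))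
  simpa [hwL] using key L le_rfl

/-- On periodic orbits of a `G_t`-network, the presence of state `2` is stable along
closed walks of the dependency relation: if `F^P(x) = x` for some `P ≥ 1` and `v` admits
a closed walk of length `L ≥ 1` from `v` to `v`, then `x_v = 2 ↔ F^L(x)_v = 2`. -/
theorem gt_state_two_closed_walk {V : Type*} [Finite V] (g : V → GtGate V)
    (x : V → Fin 3) (P : ℕ) (hP : 1 ≤ P) (hx : (gtNet g)^[P] x = x)
    (v : V) (L : ℕ) (hL : 1 ≤ L)
    (w : ℕ → V) (hw0 : w 0 = v) (hwL : w L = v)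
    (hstep : ∀ j < L, gtDep g (w j) (w (j + 1))) :
    (x v = 2 ↔ (gtNet g)^[L] x v = 2) := by
  constructor
  · intro h
    exact gt_fwd g v L w hw0 hwL hstep x h
  · intro h
    have hmul : ∀ k, (gtNet g)^[(k + 1) * L] x v = 2 := by
      intro k
      induction k with
      | zero => simpa using h
      | succ n ih =>
        have : (n + 2) * L = L + (n + 1) * L := by ring
        rw [this, Function.iterate_add_apply]
        exact gt_fwd g v L w hw0 hwL hstep _ ih
    have hfix : (gtNet g)^[P * L] x = x := by
      rw [Function.iterate_mul]
      exact Function.iterate_fixed hx L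
    have := hmul (P - 1)
    rw [Nat.sub_add_cancel hP, hfix] at this
    exact this
end

section
/- There is a finite alphabet Q (independent of n) such that for every integer n ≥ 1 there exists an automata network F : ({1,…,n} → Q) → ({1,…,n} → Q) with the locality property that F(x)_v is determined by the restriction of x to {v−1, v, v+1} ∩ {1,…,n}, and such that: (i) F has a periodic configuration whose least period is at least 2^n; (ii) F has at least 2^n fixed points; (iii) there is a configuration x whose transient is at least 2^n (i.e. F^t(x) is not periodic for all t < 2^n); and (iv) there is a periodic configuration y such that at least 2^n distinct configurations z satisfy F^t(z) = y for some t ≥ 0. -/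
namespace BDRD

/-- encode a counter cell: current digit `c` (base 4), previous digit `p`, flag `f`. -/
def enc (c p f : ℕ) : Fin 36 := ⟨c % 4 + 4 * (p % 4) + 16 * (f % 2), by omega⟩

lemma enc_val (a b c : ℕ) : (enc a b c).val = a % 4 + 4 * (b % 4) + 16 * (c % 2) := rfl

lemma enc_congr {a b c a' b' c' : ℕ} (h1 : a % 4 = a' % 4) (h2 : b % 4 = b' % 4)
    (h3 : c % 2 = c' % 2) : enc a b c = enc a' b' c' := by
  apply Fin.ext; rw [enc_val, enc_val, h1, h2, h3]

lemma dec_c (a b c : ℕ) : (enc a b c).val % 4 = a % 4 := by rw [enc_val]; omega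
lemma dec_p (a b c : ℕ) : (enc a b c).val / 4 % 4 = b % 4 := by rw [enc_val]; omega
lemma dec_f (a b c : ℕ) : (enc a b c).val / 16 = c % 2 := by rw [enc_val]; omega
lemma enc_lt (a b c : ℕ) : (enc a b c).val < 32 := by rw [enc_val]; omega

/-- rising-edge-to-3 detector -/
def trigB (w : Fin 36) : Bool := decide (w.val % 4 = 3 ∧ ¬ w.val / 4 % 4 = 3)

lemma trigB_enc (a b c : ℕ) :
    trigB (enc a b c) = decide (a % 4 = 3 ∧ ¬ b % 4 = 3) := by
  simp only [trigB, dec_c, dec_p]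

/-- local rule: `v0` says whether we are node 0; `w` is the left neighbour, `q` own state. -/
def rule (v0 : Bool) (w q : Fin 36) : Fin 36 :=
  if q.val < 32 then
    enc (q.val % 4 + (if v0 then 1 else if trigB w then 1 else 0))
        (q.val % 4)
        (if trigB q then 0 else q.val / 16)
  else if q.val < 34 then q else ⟨34, by omega⟩

def Fd (n : ℕ) (x : Fin n → Fin 36) (v : Fin n) : Fin 36 :=
  if _ : v.val = 0 then rule true (x v) (x v)
  else rule false (x ⟨v.val - 1, lt_of_le_of_lt (Nat.sub_le _ _) v.isLt⟩) (x v)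


def esh : ℕ → ℕ
  | 0 => 0
  | i+1 => esh i + 4 ^ i - 1

lemma esh_lt (i : ℕ) : esh i < 4 ^ i := by
  induction i with
  | zero => simp [esh]
  | succ i ih =>
      have h1 : 0 < (4:ℕ) ^ i := by positivity
      have h2 : (4:ℕ) ^ (i+1) = 4 ^ i * 4 := pow_succ 4 i
      simp only [esh]; omega

/-- digit `i` of the counter at time `t` (with phase offsets). -/
def cF (n i t : ℕ) : ℕ := (t + 4 ^ (n+1) + esh i) / 4 ^ i % 4
/-- previous value of digit `i`. -/
def pF (n i t : ℕ) : ℕ := (t + 4 ^ (n+1) + esh i - 1) / 4 ^ i % 4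

lemma cF_lt (n i t : ℕ) : cF n i t < 4 := Nat.mod_lt _ (by norm_num)
lemma pF_lt (n i t : ℕ) : pF n i t < 4 := Nat.mod_lt _ (by norm_num)

/-- rising edge to 3 at digit `i` at time `t`. -/
def trigA (n i t : ℕ) : Prop := cF n i t = 3 ∧ ¬ pF n i t = 3

instance (n i t : ℕ) : Decidable (trigA n i t) := by unfold trigA; infer_instance

lemma trig_iff_dvd (M a : ℕ) (hM : 0 < M) (ha : 0 < a) :
    (a / M % 4 = 3 ∧ ¬ (a - 1) / M % 4 = 3) ↔ 4 * M ∣ a + M := by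
  by_cases hd : M ∣ a
  · obtain ⟨q, rfl⟩ := hd
    have hq : 0 < q := by
      rcases Nat.eq_zero_or_pos q with h | h
      · subst h; simp at ha
      · exact h
    have h1 : M * q / M = q := Nat.mul_div_cancel_left q hM
    have h2 : (M * q - 1) / M = q - 1 := by
      have hqq : M * q = M * (q - 1) + M := by
        have : q - 1 + 1 = q := Nat.succ_pred_eq_of_pos hq
        calc M * q = M * (q - 1 + 1) := by rw [this]
        _ = M * (q-1) + M := by ring
      have h3 : M * q - 1 = M * (q - 1) + (M - 1) := by omega
      rw [h3, Nat.mul_add_div hM, Nat.div_eq_of_lt (by omega), add_zero]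
    have hR : 4 * M ∣ M * q + M ↔ 4 ∣ q + 1 := by
      rw [show M * q + M = M * (q+1) by ring, show 4 * M = M * 4 by ring]
      exact Nat.mul_dvd_mul_iff_left hM
    rw [h1, h2, hR]
    omega
  · have h3 : a / M = (a - 1) / M := by
      have h4 := Nat.succ_div (a := a-1) (b := M)
      have h5 : a - 1 + 1 = a := Nat.succ_pred_eq_of_pos ha
      rw [h5, if_neg hd, add_zero] at h4
      exact h4
    constructor
    · rintro ⟨h6, h7⟩; rw [h3] at h6; exact absurd h6 h7
    · intro h8
      exfalso
      have h9 : M ∣ a + M := (dvd_mul_left M 4).trans h8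
      have h10 : M ∣ a := by
        have := Nat.dvd_sub h9 (dvd_refl M)
        simpa using this
      exact hd h10

lemma cstep (M a : ℕ) (hM : 0 < M) (ha : 0 < a) :
    (a + M) / (4 * M) % 4 =
      ((a + M - 1) / (4 * M) % 4
        + (if a / M % 4 = 3 ∧ ¬ (a - 1) / M % 4 = 3 then 1 else 0)) % 4 := by
  have hiff := trig_iff_dvd M a hM ha
  have h5 : a + M - 1 + 1 = a + M := by omega
  have hsd := Nat.succ_div (a := a + M - 1) (b := 4 * M)
  rw [h5] at hsd
  by_cases hd : 4 * M ∣ a + M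
  · rw [if_pos (hiff.mpr hd)]
    rw [if_pos hd] at hsd
    omega
  · rw [if_neg (fun h => hd (hiff.mp h))]
    rw [if_neg hd] at hsd
    omega

lemma pF_succ (n i t : ℕ) : pF n i (t+1) = cF n i t := by
  unfold pF cF
  have hB : 0 < (4:ℕ) ^ (n+1) := by positivity
  have h : t + 1 + 4 ^ (n+1) + esh i - 1 = t + 4 ^ (n+1) + esh i := by omega
  rw [h]

lemma cF_zero (n t : ℕ) : cF n 0 t = (t + 4 ^ (n+1)) % 4 := by
  simp [cF, esh]

lemma cF_step_zero (n t : ℕ) : cF n 0 (t+1) = (cF n 0 t + 1) % 4 := by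
  rw [cF_zero, cF_zero]; omega

lemma cF_succ_t (n j t : ℕ) :
    cF n (j+1) t = (t + 4 ^ (n+1) + esh j + 4 ^ j - 1) / (4 * 4 ^ j) % 4 := by
  have h1 : 0 < (4:ℕ) ^ j := by positivity
  have hB : 0 < (4:ℕ) ^ (n+1) := by positivity
  have hnum : t + 4 ^ (n+1) + esh (j+1) = t + 4 ^ (n+1) + esh j + 4 ^ j - 1 := by
    simp only [esh]; omega
  have hden : (4:ℕ) ^ (j+1) = 4 * 4 ^ j := by rw [pow_succ]; ring
  unfold cF
  rw [hnum, hden]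

lemma cF_step_succ (n j t : ℕ) :
    cF n (j+1) (t+1) = (cF n (j+1) t + (if trigA n j t then 1 else 0)) % 4 := by
  have hM : 0 < (4:ℕ) ^ j := by positivity
  have hB : 0 < (4:ℕ) ^ (n+1) := by positivity
  set a := t + 4 ^ (n+1) + esh j with ha_def
  have ha : 0 < a := by omega
  have h1 : cF n (j+1) t = (a + 4 ^ j - 1) / (4 * 4 ^ j) % 4 := cF_succ_t n j t
  have h2 : cF n (j+1) (t+1) = (a + 4 ^ j) / (4 * 4 ^ j) % 4 := by
    rw [cF_succ_t]
    congr 2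
    omega
  have h3 := cstep (4 ^ j) a hM ha
  have h4 : trigA n j t ↔ (a / 4 ^ j % 4 = 3 ∧ ¬ (a - 1) / 4 ^ j % 4 = 3) := Iff.rfl
  rw [h1, h2, h3]
  by_cases htr : trigA n j t
  · rw [if_pos (h4.mp htr), if_pos htr]
  · rw [if_neg (fun hh => htr (h4.mpr hh)), if_neg htr]

lemma rule_enc (v0 : Bool) (w : Fin 36) (a b c : ℕ) :
    rule v0 w (enc a b c) =
      enc (a % 4 + (if v0 then 1 else if trigB w then 1 else 0)) (a % 4)
          (if a % 4 = 3 ∧ ¬ b % 4 = 3 then 0 else c % 2) := by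
  unfold rule
  rw [if_pos (enc_lt a b c), dec_c, dec_f, trigB_enc]
  simp only [decide_eq_true_eq]

def gfl (n : ℕ) : ℕ → ℕ
  | 0 => 1
  | t+1 => if trigA n (n-1) t then 0 else gfl n t

def W (n : ℕ) (φ : ℕ → ℕ) (t : ℕ) : Fin n → Fin 36 :=
  fun v => enc (cF n v.val t) (pF n v.val t) (if v.val = n - 1 then φ t else 0)

lemma W_step (n : ℕ) (φ : ℕ → ℕ) (t : ℕ)
    (hφ : φ (t+1) = if trigA n (n-1) t then 0 else φ t) :
    Fd n (W n φ t) = W n φ (t+1) := by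
  funext v
  unfold Fd
  by_cases h0 : v.val = 0
  · rw [dif_pos h0]
    simp only [W]
    rw [rule_enc, h0]
    rw [if_pos rfl]
    have hc := cF_lt n 0 t
    have hp := pF_lt n 0 t
    apply enc_congr
    · have h1 := cF_step_zero n t
      omega
    · have h1 := pF_succ n 0 t
      omega
    · by_cases hn1 : (0 : ℕ) = n - 1
      · rw [if_pos hn1, if_pos hn1, hφ]
        rw [← hn1]
        have hcond : (cF n 0 t % 4 = 3 ∧ ¬ pF n 0 t % 4 = 3) ↔ trigA n 0 t := by
          unfold trigA; omega
        by_cases htr : trigA n 0 t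
        · rw [if_pos (hcond.mpr htr), if_pos htr]
        · rw [if_neg (fun h => htr (hcond.mp h)), if_neg htr]
          omega
      · rw [if_neg hn1, if_neg hn1]
        simp
  · rw [dif_neg h0]
    rcases v with ⟨vv, hlt⟩
    simp only at h0 ⊢
    obtain ⟨j, hv⟩ : ∃ j, vv = j + 1 := ⟨vv - 1, by omega⟩
    subst hv
    simp only [W, Nat.add_sub_cancel]
    rw [rule_enc]
    rw [if_neg (by simp)]
    rw [trigB_enc]
    have hc := cF_lt n (j+1) t
    have hp := pF_lt n (j+1) t
    have hcj := cF_lt n j t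
    have hpj := pF_lt n j t
    apply enc_congr
    · have h1 := cF_step_succ n j t
      have hcond : (cF n j t % 4 = 3 ∧ ¬ pF n j t % 4 = 3) ↔ trigA n j t := by
        unfold trigA; omega
      by_cases htr : trigA n j t
      · rw [if_pos (by simpa using hcond.mpr htr)]
        rw [if_pos htr] at h1
        omega
      · rw [if_neg (by simpa using (fun h => htr (hcond.mp h)))]
        rw [if_neg htr] at h1
        omega
    · have h1 := pF_succ n (j+1) t
      omega
    · by_cases hn1 : j + 1 = n - 1
      · rw [if_pos hn1, if_pos hn1, hφ]
        rw [← hn1]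
        have hcond : (cF n (j+1) t % 4 = 3 ∧ ¬ pF n (j+1) t % 4 = 3) ↔ trigA n (j+1) t := by
          unfold trigA; omega
        by_cases htr : trigA n (j+1) t
        · rw [if_pos (hcond.mpr htr), if_pos htr]
        · rw [if_neg (fun h => htr (hcond.mp h)), if_neg htr]
          omega
      · rw [if_neg hn1, if_neg hn1]
        simp

lemma W_iter (n : ℕ) (φ : ℕ → ℕ)
    (hφ : ∀ t, φ (t+1) = if trigA n (n-1) t then 0 else φ t) (t : ℕ) :
    (Fd n)^[t] (W n φ 0) = W n φ t := by
  induction t with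
  | zero => rfl
  | succ t ih => rw [Function.iterate_succ_apply', ih, W_step n φ t (hφ t)]


lemma div_pow_shift (n i A : ℕ) (hi : i < n) :
    (A + 4 ^ n) / 4 ^ i % 4 = A / 4 ^ i % 4 := by
  have h1 : 0 < (4:ℕ) ^ i := by positivity
  obtain ⟨d, rfl⟩ : ∃ d, n = i + (1 + d) := ⟨n - i - 1, by omega⟩
  have h2 : (4:ℕ) ^ (i + (1 + d)) = 4 ^ i * (4 * 4 ^ d) := by
    rw [pow_add, pow_add, pow_one]
  rw [h2, Nat.add_mul_div_left _ _ h1]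
  omega

lemma cF_per (n i t : ℕ) (hi : i < n) : cF n i (t + 4 ^ n) = cF n i t := by
  unfold cF
  have hc : t + 4 ^ n + 4 ^ (n+1) + esh i = (t + 4 ^ (n+1) + esh i) + 4 ^ n := by ring
  rw [hc, div_pow_shift n i _ hi]

lemma pF_per (n i t : ℕ) (hi : i < n) : pF n i (t + 4 ^ n) = pF n i t := by
  unfold pF
  have hB : 0 < (4:ℕ) ^ (n+1) := by positivity
  have hc : t + 4 ^ n + 4 ^ (n+1) + esh i - 1 = (t + 4 ^ (n+1) + esh i - 1) + 4 ^ n := by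
    omega
  rw [hc, div_pow_shift n i _ hi]

lemma W_period (n : ℕ) (φ : ℕ → ℕ) (hφ0 : φ (4 ^ n) = φ 0) :
    W n φ (4 ^ n) = W n φ 0 := by
  funext v
  have hvlt := v.isLt
  unfold W
  rw [hφ0]
  have h1 : cF n v.val (4 ^ n) = cF n v.val 0 := by
    have := cF_per n v.val 0 hvlt
    rwa [zero_add] at this
  have h2 : pF n v.val (4 ^ n) = pF n v.val 0 := by
    have := pF_per n v.val 0 hvlt
    rwa [zero_add] at this
  rw [h1, h2]


/-- the first-trigger time of the top cell -/
def tstar (n : ℕ) : ℕ := 3 * 4 ^ (n-1) - esh (n-1)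

lemma pow4_eq (n : ℕ) (hn : 1 ≤ n) : (4:ℕ) ^ n = 4 ^ (n-1) * 4 := by
  obtain ⟨m, rfl⟩ : ∃ m, n = m + 1 := ⟨n - 1, by omega⟩
  rw [pow_succ]
  simp

lemma pow4_eq2 (n : ℕ) (hn : 1 ≤ n) : (4:ℕ) ^ (n+1) = 4 ^ (n-1) * 16 := by
  have h : n + 1 = (n - 1) + 2 := by omega
  rw [h, pow_add]
  norm_num

lemma two_pow_le (n : ℕ) (hn : 1 ≤ n) : 2 ^ n ≤ 2 * 4 ^ (n-1) := by
  have h1 : (2:ℕ) ^ (n-1) ≤ 4 ^ (n-1) := Nat.pow_le_pow_left (by norm_num) _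
  have h2 : (2:ℕ) ^ n = 2 * 2 ^ (n-1) := by
    obtain ⟨m, rfl⟩ : ∃ m, n = m + 1 := ⟨n - 1, by omega⟩
    rw [pow_succ]; simp; ring
  omega

lemma notrig (n : ℕ) (hn : 1 ≤ n) (s : ℕ) (hs : s < 2 ^ n) : ¬ trigA n (n-1) s := by
  intro htr
  have hM : 0 < (4:ℕ) ^ (n-1) := by positivity
  have ha : 0 < s + 4 ^ (n+1) + esh (n-1) := by positivity
  have hdvd := (trig_iff_dvd (4 ^ (n-1)) (s + 4 ^ (n+1) + esh (n-1)) hM ha).mp htr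
  have h44 : 4 * 4 ^ (n-1) = 4 ^ n := by rw [pow4_eq n hn]; ring
  rw [h44] at hdvd
  have hre : s + 4 ^ (n+1) + esh (n-1) + 4 ^ (n-1)
      = 4 ^ n * 4 + (s + esh (n-1) + 4 ^ (n-1)) := by
    have := pow4_eq2 n hn
    have := pow4_eq n hn
    omega
  rw [hre] at hdvd
  have hd2 : 4 ^ n ∣ s + esh (n-1) + 4 ^ (n-1) :=
    (Nat.dvd_add_right (dvd_mul_right _ _)).mp hdvd
  have hle := Nat.le_of_dvd (by omega) hd2
  have hesh := esh_lt (n-1)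
  have h2p := two_pow_le n hn
  have := pow4_eq n hn
  omega

lemma trig_tstar (n : ℕ) (hn : 1 ≤ n) : trigA n (n-1) (tstar n) := by
  have hM : 0 < (4:ℕ) ^ (n-1) := by positivity
  have hesh := esh_lt (n-1)
  have hnum : tstar n + 4 ^ (n+1) + esh (n-1) = 4 ^ (n-1) * 19 := by
    have := pow4_eq2 n hn
    unfold tstar
    omega
  constructor
  · show cF n (n-1) (tstar n) = 3
    unfold cF
    rw [hnum, Nat.mul_div_cancel_left _ hM]
  · show ¬ pF n (n-1) (tstar n) = 3
    unfold pF
    rw [hnum]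
    have h18 : 4 ^ (n-1) * 19 - 1 = 4 ^ (n-1) * 18 + (4 ^ (n-1) - 1) := by omega
    rw [h18, Nat.mul_add_div hM, Nat.div_eq_of_lt (by omega)]
    omega

lemma gfl_one (n : ℕ) (hn : 1 ≤ n) : ∀ t, t ≤ 2 ^ n → gfl n t = 1 := by
  intro t
  induction t with
  | zero => intro _; rfl
  | succ t ih =>
      intro ht
      show (if trigA n (n-1) t then 0 else gfl n t) = 1
      rw [if_neg (notrig n hn t (by omega)), ih (by omega)]

lemma gfl_zero (n : ℕ) (hn : 1 ≤ n) : ∀ s, tstar n + 1 ≤ s → gfl n s = 0 := by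
  have base : gfl n (tstar n + 1) = 0 := by
    show (if trigA n (n-1) (tstar n) then 0 else gfl n (tstar n)) = 0
    rw [if_pos (trig_tstar n hn)]
  have step : ∀ m, gfl n (tstar n + 1 + m) = 0 := by
    intro m
    induction m with
    | zero => exact base
    | succ m ih =>
        show (if trigA n (n-1) (tstar n + 1 + m) then 0 else gfl n (tstar n + 1 + m)) = 0
        rw [ih]
        split <;> rfl
  intro s hs
  obtain ⟨m, rfl⟩ := Nat.exists_eq_add_of_le hs
  exact step m

/-- rules on the frozen/collapsing part of the alphabet -/
lemma rule_frozen (v0 : Bool) (w : Fin 36) (q : Fin 36) (h1 : 32 ≤ q.val) (h2 : q.val < 34) :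
    rule v0 w q = q := by
  unfold rule
  rw [if_neg (by omega), if_pos h2]

lemma rule_collapse (v0 : Bool) (w : Fin 36) (q : Fin 36) (h1 : 34 ≤ q.val) :
    rule v0 w q = ⟨34, by omega⟩ := by
  unfold rule
  rw [if_neg (by omega), if_neg (by omega)]

lemma Fd_frozen (n : ℕ) (x : Fin n → Fin 36) (v : Fin n)
    (h1 : 32 ≤ (x v).val) (h2 : (x v).val < 34) : Fd n x v = x v := by
  unfold Fd
  by_cases h0 : v.val = 0
  · rw [dif_pos h0, rule_frozen _ _ _ h1 h2]
  · rw [dif_neg h0, rule_frozen _ _ _ h1 h2]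

lemma Fd_collapse (n : ℕ) (x : Fin n → Fin 36) (v : Fin n)
    (h1 : 34 ≤ (x v).val) : Fd n x v = ⟨34, by omega⟩ := by
  unfold Fd
  by_cases h0 : v.val = 0
  · rw [dif_pos h0, rule_collapse _ _ _ h1]
  · rw [dif_neg h0, rule_collapse _ _ _ h1]

lemma Fd_local (n : ℕ) (x y : Fin n → Fin 36) (v : Fin n)
    (h : ∀ u : Fin n, Nat.dist (u : ℕ) (v : ℕ) ≤ 1 → x u = y u) :
    Fd n x v = Fd n y v := by
  have hv : x v = y v := h v (by simp [Nat.dist])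
  unfold Fd
  by_cases h0 : v.val = 0
  · rw [dif_pos h0, dif_pos h0, hv]
  · rw [dif_neg h0, dif_neg h0, hv]
    have hprev : x ⟨v.val - 1, lt_of_le_of_lt (Nat.sub_le _ _) v.isLt⟩
        = y ⟨v.val - 1, lt_of_le_of_lt (Nat.sub_le _ _) v.isLt⟩ := by
      apply h
      simp only [Nat.dist]
      omega
    rw [hprev]


def ph0 : ℕ → ℕ := fun _ => 0

lemma part1 (n : ℕ) (hn : 1 ≤ n) :
    ∃ x, x ∈ Function.periodicPts (Fd n) ∧ 2 ^ n ≤ Function.minimalPeriod (Fd n) x := by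
  have hφ : ∀ t, ph0 (t+1) = if trigA n (n-1) t then 0 else ph0 t := by
    intro t; simp [ph0]
  have hper : Function.IsPeriodicPt (Fd n) (4 ^ n) (W n ph0 0) := by
    show (Fd n)^[4 ^ n] (W n ph0 0) = W n ph0 0
    rw [W_iter n ph0 hφ, W_period n ph0 rfl]
  have hpos : 0 < (4:ℕ) ^ n := by positivity
  refine ⟨W n ph0 0, Function.mk_mem_periodicPts hpos hper, ?_⟩
  have hdvd : Function.minimalPeriod (Fd n) (W n ph0 0) ∣ 4 ^ n := hper.minimalPeriod_dvd
  have h4n : (4:ℕ) ^ n = 2 ^ (2*n) := by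
    rw [show (4:ℕ) = 2 ^ 2 by norm_num, ← pow_mul]
  rw [h4n] at hdvd
  obtain ⟨j, hj, hpj⟩ := (Nat.dvd_prime_pow Nat.prime_two).mp hdvd
  by_cases hjn : n ≤ j
  · rw [hpj]; exact Nat.pow_le_pow_right (by norm_num) hjn
  · exfalso
    have hdvd2 : Function.minimalPeriod (Fd n) (W n ph0 0) ∣ 2 ^ (2*n-1) := by
      rw [hpj]; exact pow_dvd_pow 2 (by omega)
    obtain ⟨c, hc⟩ := hdvd2
    have hit : (Fd n)^[2 ^ (2*n-1)] (W n ph0 0) = W n ph0 0 := by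
      have h := (Function.isPeriodicPt_minimalPeriod (Fd n) (W n ph0 0)).mul_const c
      rw [← hc] at h
      exact h
    rw [W_iter n ph0 hφ] at hit
    have hE : enc (cF n (n-1) (2 ^ (2*n-1))) (pF n (n-1) (2 ^ (2*n-1)))
          (if n-1 = n-1 then ph0 (2 ^ (2*n-1)) else 0)
        = enc (cF n (n-1) 0) (pF n (n-1) 0) (if n-1 = n-1 then ph0 0 else 0) :=
      congrFun hit ⟨n-1, by omega⟩
    have hval := congrArg Fin.val hE
    rw [enc_val, enc_val, if_pos rfl, if_pos rfl] at hval
    have hM : 0 < (4:ℕ) ^ (n-1) := by positivity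
    have hpow : (2:ℕ) ^ (2*n-1) = 4 ^ (n-1) * 2 := by
      rw [show (4:ℕ) = 2 ^ 2 by norm_num, ← pow_mul, ← pow_succ]
      congr 1
      omega
    have hcc : cF n (n-1) (2 ^ (2*n-1)) = (cF n (n-1) 0 + 2) % 4 := by
      unfold cF
      rw [hpow]
      have hre : 4 ^ (n-1) * 2 + 4 ^ (n+1) + esh (n-1)
          = (0 + 4 ^ (n+1) + esh (n-1)) + 4 ^ (n-1) * 2 := by ring
      rw [hre, Nat.add_mul_div_left _ _ hM]
      omega
    have hb1 := cF_lt n (n-1) (2 ^ (2*n-1))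
    have hb2 := cF_lt n (n-1) 0
    have hb3 := pF_lt n (n-1) (2 ^ (2*n-1))
    have hb4 := pF_lt n (n-1) 0
    simp only [ph0] at hval
    omega

lemma part3 (n : ℕ) (hn : 1 ≤ n) :
    ∃ x, ∀ t, t < 2 ^ n → (Fd n)^[t] x ∉ Function.periodicPts (Fd n) := by
  have hg : ∀ t, gfl n (t+1) = if trigA n (n-1) t then 0 else gfl n t := fun t => rfl
  refine ⟨W n (gfl n) 0, ?_⟩
  intro t ht hmem
  obtain ⟨m, hm, hp⟩ := Function.mem_periodicPts.mp hmem
  have h1 : (Fd n)^[m * (tstar n + 1)] ((Fd n)^[t] (W n (gfl n) 0))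
      = (Fd n)^[t] (W n (gfl n) 0) := hp.mul_const (tstar n + 1)
  rw [← Function.iterate_add_apply] at h1
  rw [W_iter n (gfl n) hg, W_iter n (gfl n) hg] at h1
  have hE : enc (cF n (n-1) (m * (tstar n + 1) + t)) (pF n (n-1) (m * (tstar n + 1) + t))
        (if n-1 = n-1 then gfl n (m * (tstar n + 1) + t) else 0)
      = enc (cF n (n-1) t) (pF n (n-1) t) (if n-1 = n-1 then gfl n t else 0) :=
    congrFun h1 ⟨n-1, by omega⟩
  have hval := congrArg Fin.val hE
  rw [enc_val, enc_val, if_pos rfl, if_pos rfl] at hval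
  have hz : gfl n (m * (tstar n + 1) + t) = 0 := by
    apply gfl_zero n hn
    have : tstar n + 1 ≤ m * (tstar n + 1) := Nat.le_mul_of_pos_left _ hm
    omega
  have ho : gfl n t = 1 := gfl_one n hn t (by omega)
  rw [hz, ho] at hval
  have hb1 := cF_lt n (n-1) (m * (tstar n + 1) + t)
  have hb2 := cF_lt n (n-1) t
  have hb3 := pF_lt n (n-1) (m * (tstar n + 1) + t)
  have hb4 := pF_lt n (n-1) t
  omega

def frz (n : ℕ) (b : Fin n → Fin 2) : Fin n → Fin 36 :=
  fun v => ⟨32 + (b v).val, by have := (b v).isLt; omega⟩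

lemma frz_fixed (n : ℕ) (b : Fin n → Fin 2) : Fd n (frz n b) = frz n b := by
  funext v
  apply Fd_frozen
  · show 32 ≤ 32 + (b v).val; omega
  · show 32 + (b v).val < 34; have := (b v).isLt; omega

lemma card_aux (n : ℕ) : Nat.card (Fin n → Fin 2) = 2 ^ n := by
  rw [Nat.card_eq_fintype_card, Fintype.card_fun, Fintype.card_fin, Fintype.card_fin]

lemma part2 (n : ℕ) : 2 ^ n ≤ Nat.card {x : Fin n → Fin 36 // Fd n x = x} := by
  rw [← card_aux n]
  apply Nat.card_le_card_of_injective
    (fun b => (⟨frz n b, frz_fixed n b⟩ : {x : Fin n → Fin 36 // Fd n x = x}))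
  intro b b' h
  funext v
  have hv := congrArg Fin.val (congrFun (congrArg Subtype.val h) v)
  simp only [frz] at hv
  have h1 := (b v).isLt
  have h2 := (b' v).isLt
  exact Fin.ext (by omega)

def cly (n : ℕ) : Fin n → Fin 36 := fun _ => ⟨34, by omega⟩

def clz (n : ℕ) (b : Fin n → Fin 2) : Fin n → Fin 36 :=
  fun v => ⟨34 + (b v).val, by have := (b v).isLt; omega⟩

lemma cly_fixed (n : ℕ) : Fd n (cly n) = cly n := by
  funext v
  exact Fd_collapse n (cly n) v (by show 34 ≤ 34 + 0; omega)

lemma clz_to (n : ℕ) (b : Fin n → Fin 2) : Fd n (clz n b) = cly n := by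
  funext v
  exact Fd_collapse n (clz n b) v (by show 34 ≤ 34 + (b v).val; omega)

lemma part4 (n : ℕ) :
    ∃ y, y ∈ Function.periodicPts (Fd n) ∧
      2 ^ n ≤ Nat.card {z : Fin n → Fin 36 // ∃ t : ℕ, (Fd n)^[t] z = y} := by
  refine ⟨cly n, Function.mk_mem_periodicPts one_pos ?_, ?_⟩
  · show (Fd n)^[1] (cly n) = cly n
    rw [Function.iterate_one, cly_fixed]
  · rw [← card_aux n]
    apply Nat.card_le_card_of_injective
      (fun b => (⟨clz n b, 1, by rw [Function.iterate_one, clz_to]⟩ :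
        {z : Fin n → Fin 36 // ∃ t : ℕ, (Fd n)^[t] z = cly n}))
    intro b b' h
    funext v
    have hv := congrArg Fin.val (congrFun (congrArg Subtype.val h) v)
    simp only [clz] at hv
    have h1 := (b v).isLt
    have h2 := (b' v).isLt
    exact Fin.ext (by omega)

end BDRD


/-- **Rich dynamics on bounded-degree path networks** (paper's Proposition on
bounded-degree dynamics).  There is a finite alphabet `Q = Fin k` (independent of `n`)
such that for every `n ≥ 1` there is an automata network `F` on nodes `{1,…,n}` (as
`Fin n`) whose behaviour at node `v` only depends on the restriction of the
configuration to `{v−1, v, v+1}` (nodes at distance ≤ 1 on the path), and which has: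
(i) a periodic configuration of least period at least `2^n`;
(ii) at least `2^n` fixed points;
(iii) a configuration with transient at least `2^n` (no iterate before time `2^n` is
periodic); and
(iv) a periodic configuration `y` reached (in some time `t ≥ 0`) from at least `2^n`
distinct configurations. -/
theorem bounded_degree_rich_dynamics :
    ∃ k : ℕ, ∀ n : ℕ, 1 ≤ n →
      ∃ F : (Fin n → Fin k) → (Fin n → Fin k),
        (∀ (x y : Fin n → Fin k) (v : Fin n),
            (∀ u : Fin n, Nat.dist (u : ℕ) (v : ℕ) ≤ 1 → x u = y u) → F x v = F y v) ∧
        (∃ x, x ∈ Function.periodicPts F ∧ 2 ^ n ≤ Function.minimalPeriod F x) ∧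
        (2 ^ n ≤ Nat.card {x : Fin n → Fin k // F x = x}) ∧
        (∃ x, ∀ t, t < 2 ^ n → F^[t] x ∉ Function.periodicPts F) ∧
        (∃ y, y ∈ Function.periodicPts F ∧
          2 ^ n ≤ Nat.card {z : Fin n → Fin k // ∃ t : ℕ, F^[t] z = y}) := by
    exact ⟨36, fun n hn => ⟨BDRD.Fd n, BDRD.Fd_local n, BDRD.part1 n hn, BDRD.part2 n,
    BDRD.part3 n hn, BDRD.part4 n⟩⟩
end

section
/- For every integer n ≥ 1 there exists an automata network H : ({1,…,n} → Q) → ({1,…,n} → Q) over the alphabet Q = {0,1} × {0,1} × {0,1} (so |Q| = 8) such that for every configuration c, every integer k with 1 ≤ k < 2^n, and every node v ∈ {1,…,n}, there exists an integer t ≥ 1 with H^{k·t}(c)_v ≠ c_v. -/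
open Finset

private def cfgAux (n m : ℕ) : Fin n → Bool × Bool × Bool :=
  fun v => (m.testBit v, m.testBit (n - 1), false)

private def decAux (n : ℕ) (c : Fin n → Bool × Bool × Bool) : ℕ :=
  ∑ v : Fin n, ((c v).1.toNat) * 2 ^ (v : ℕ)

private lemma dec_cfg (n m : ℕ) : decAux n (cfgAux n m) = m % 2 ^ n := by
  induction n with
  | zero => simp [decAux, Nat.mod_one]
  | succ n ih =>
    have : decAux (n+1) (cfgAux (n+1) m)
        = (∑ v : Fin n, ((m.testBit v).toNat) * 2 ^ (v : ℕ)) + (m.testBit n).toNat * 2 ^ n := by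
      simp [decAux, cfgAux, Fin.sum_univ_castSucc]
    rw [this]
    have ih' : (∑ v : Fin n, ((m.testBit v).toNat) * 2 ^ (v : ℕ)) = m % 2 ^ n := by
      simpa [decAux, cfgAux] using ih
    rw [ih', Nat.mod_pow_succ, Nat.toNat_testBit]
    ring

private lemma cfg_mod (n m : ℕ) (hn : 1 ≤ n) : cfgAux n (m % 2 ^ n) = cfgAux n m := by
  have h1 : n - 1 < n := by omega
  funext v
  simp [cfgAux, Nat.testBit_mod_two_pow, v.isLt, h1]

private def Hnet (n : ℕ) (c : Fin n → Bool × Bool × Bool) : Fin n → Bool × Bool × Bool :=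
  cfgAux n ((decAux n c + 1) % 2 ^ n)

private lemma iter_Hnet (n : ℕ) (hn : 1 ≤ n) (c : Fin n → Bool × Bool × Bool) :
    ∀ s, 1 ≤ s → (Hnet n)^[s] c = cfgAux n ((decAux n c + s) % 2 ^ n) := by
  intro s hs
  induction s with
  | zero => omega
  | succ s ih =>
    rcases Nat.eq_or_lt_of_le hs with h | h
    · simp [← h, Hnet]
    · have hs1 : 1 ≤ s := by omega
      rw [Function.iterate_succ_apply', ih hs1, Hnet, dec_cfg, Nat.mod_mod_of_dvd _ dvd_rfl,
        Nat.mod_add_mod, cfg_mod n _ hn, cfg_mod n _ hn, ← Nat.add_assoc]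

private lemma topbit_flip (n y : ℕ) (hn : 1 ≤ n) :
    ((y + 2 ^ (n - 1)) % 2 ^ n).testBit (n - 1) = !((y % 2 ^ n).testBit (n - 1)) := by
  have h2 : 2 ^ n = 2 ^ (n - 1) * 2 := by
    rw [← pow_succ]; congr 1; omega
  set p := 2 ^ (n - 1) with hp
  have hppos : 0 < p := by positivity
  set z := y % 2 ^ n with hz
  have hzlt : z < 2 ^ n := Nat.mod_lt _ (by positivity)
  have key : ∀ w, w < 2 ^ n → w.testBit (n - 1) = decide (p ≤ w) := by
    intro w hw
    rw [Nat.testBit_eq_decide_div_mod_eq, ← hp]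
    rcases le_or_gt p w with h | h
    · have : w / p = 1 := by
        apply Nat.div_eq_of_lt_le
        · simpa using h
        · rw [h2] at hw; omega
      simp [this, h]
    · simp [Nat.div_eq_of_lt h, h.not_ge]
  have hmod : (y + p) % 2 ^ n = (z + p) % 2 ^ n := by
    rw [hz, Nat.mod_add_mod]
  rw [hmod, key z hzlt]
  rcases le_or_gt p z with h | h
  · have hlt : z + p - 2 ^ n < 2 ^ n := by omega
    have : (z + p) % 2 ^ n = z + p - 2 ^ n := by
      rw [Nat.mod_eq_sub_mod (by omega), Nat.mod_eq_of_lt hlt]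
    rw [this, key _ hlt]
    simp only [← decide_not, decide_eq_decide]
    omega
  · have hlt : z + p < 2 ^ n := by omega
    rw [Nat.mod_eq_of_lt hlt, key _ hlt]
    simp only [← decide_not, decide_eq_decide]
    omega

private lemma solve_cong (n k : ℕ) (hn : 1 ≤ n) (hk : 1 ≤ k) (hk2 : k < 2 ^ n) :
    ∃ t, 1 ≤ t ∧ k * t ≡ 2 ^ (n - 1) [MOD 2 ^ n] := by
  obtain ⟨j, u, hu, hku⟩ := Nat.exists_eq_two_pow_mul_odd (show k ≠ 0 by omega)
  have hupos : 1 ≤ u := hu.pos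
  have hj : j ≤ n - 1 := by
    by_contra h
    have h1 : 2 ^ n ≤ 2 ^ j := Nat.pow_le_pow_right (by norm_num) (by omega)
    nlinarith
  have hcop : (2 ^ n).Coprime u := (Nat.coprime_two_left.mpr hu).pow_left n
  have h2n : 1 < 2 ^ n := by
    calc 1 < 2 ^ 1 := by norm_num
    _ ≤ 2 ^ n := Nat.pow_le_pow_right (by norm_num) hn
  obtain ⟨u', -, hu'⟩ := Nat.exists_mul_mod_eq_one_of_coprime hcop.symm h2n
  refine ⟨u' * 2 ^ (n - 1 - j) + 2 ^ n, by omega, ?_⟩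
  have hmod : u * u' ≡ 1 [MOD 2 ^ n] := by
    unfold Nat.ModEq
    rw [hu']
    exact (Nat.mod_eq_of_lt h2n).symm
  have heq : k * (u' * 2 ^ (n - 1 - j) + 2 ^ n) % 2 ^ n = k * (u' * 2 ^ (n - 1 - j)) % 2 ^ n := by
    rw [Nat.mul_add, Nat.add_mul_mod_self_right]
  have hsplit : k * (u' * 2 ^ (n - 1 - j)) = (u * u') * 2 ^ (n - 1) := by
    rw [hku]
    have : 2 ^ j * 2 ^ (n - 1 - j) = 2 ^ (n - 1) := by
      rw [← pow_add]; congr 1; omega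
    calc 2 ^ j * u * (u' * 2 ^ (n - 1 - j)) = (u * u') * (2 ^ j * 2 ^ (n - 1 - j)) := by ring
    _ = (u * u') * 2 ^ (n - 1) := by rw [this]
  show k * (u' * 2 ^ (n - 1 - j) + 2 ^ n) % 2 ^ n = 2 ^ (n - 1) % 2 ^ n
  rw [heq, hsplit]
  simpa [Nat.ModEq] using (hmod.mul_right (2 ^ (n - 1)))

/-- For every `n ≥ 1` there is an automata network `H` on `n` nodes over the
alphabet `Q = {0,1} × {0,1} × {0,1}` such that for every configuration `c`, every
`k` with `1 ≤ k < 2^n` and every node `v`, some iterate of `H` at a multiple `k·t`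
(`t ≥ 1`) of `k` changes the state of `v`. -/
theorem change_at_every_gap (n : ℕ) (hn : 1 ≤ n) :
    ∃ H : (Fin n → Bool × Bool × Bool) → (Fin n → Bool × Bool × Bool),
      ∀ (c : Fin n → Bool × Bool × Bool) (k : ℕ), 1 ≤ k → k < 2 ^ n →
        ∀ v : Fin n, ∃ t : ℕ, 1 ≤ t ∧ H^[k * t] c v ≠ c v := by
  refine ⟨Hnet n, fun c k hk hk2 v => ?_⟩
  set x0 := decAux n c with hx0
  by_cases hb : (c v).2.1 = ((x0 % 2 ^ n).testBit (n - 1))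
  · -- use the 2^(n-1) shift
    obtain ⟨t, ht1, ht⟩ := solve_cong n k hn hk hk2
    refine ⟨t, ht1, ?_⟩
    have hkt : 1 ≤ k * t := Nat.one_le_iff_ne_zero.mpr (by positivity)
    rw [iter_Hnet n hn c _ hkt]
    intro hEq
    have h2 : ((x0 + k * t) % 2 ^ n).testBit (n - 1) = (c v).2.1 := by
      rw [← hEq]; rfl
    have hcong : (x0 + k * t) % 2 ^ n = (x0 + 2 ^ (n - 1)) % 2 ^ n :=
      (Nat.ModEq.refl x0).add ht
    rw [hcong, topbit_flip n x0 hn, hb] at h2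
    simp [show 0 < n by omega] at h2
  · refine ⟨2 ^ n, Nat.one_le_two_pow, ?_⟩
    have hkt : 1 ≤ k * 2 ^ n := Nat.one_le_iff_ne_zero.mpr (by positivity)
    rw [iter_Hnet n hn c _ hkt]
    intro hEq
    have h2 : ((x0 + k * 2 ^ n) % 2 ^ n).testBit (n - 1) = (c v).2.1 := by
      rw [← hEq]; rfl
    rw [Nat.add_mul_mod_self_right] at h2
    exact hb h2.symm
end

section
/- Fix integers α ≥ 1, c ≥ 1, k ≥ 1. Then there exists N such that for every n ≥ N the following configuration of objects does NOT exist: a finite alphabet Q; a finite simple graph H on a vertex set W with |W| ≤ α·n satisfying the ball-growth bound that for every X ⊆ W with |X| ≤ α and every integer t ≥ 1, the set of vertices of H at graph distance at most t from X has at most c·t^k elements; an automata network G : (W → Q) → (W → Q) such that for every w ∈ W, G(x)_w is determined by the restriction of x to the closed neighbourhood of w in H; and a block embedding φ from ({1,…,n} → Bool) into (W → Q) with time constant T, 1 ≤ T ≤ α, such that φ ∘ F0 = G^T ∘ φ, where F0 is the disjunctive network with self-loops on the complete binary tree with n nodes: F0(x)_v = x_v ∨ x_{⌊v/2⌋} ∨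 x_{2v} ∨ x_{2v+1} for v ∈ {1,…,n}, where a disjunct is omitted when its index lies outside {1,…,n} (and x_{⌊v/2⌋} is omitted when v = 1). -/
/-- Value of a configuration on `{1,…,n}` (coded as `Fin n`, node `v` standing for
`v+1`) at position `m ∈ ℕ`, defaulting to `false` when `m ∉ {1,…,n}` (so disjuncts
at out-of-range indices are omitted). -/
def getNode (n : ℕ) (x : Fin n → Bool) (m : ℕ) : Bool :=
  if h : 1 ≤ m ∧ m ≤ n then x ⟨m - 1, by omega⟩ else false

/-- The disjunctive network with self-loops on the complete binary tree with `n`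
nodes `{1,…,n}`: `F0(x)_v = x_v ∨ x_{⌊v/2⌋} ∨ x_{2v} ∨ x_{2v+1}`, disjuncts at
indices outside `{1,…,n}` being omitted (in particular the parent disjunct is
omitted when `v = 1`). -/
def treeNet (n : ℕ) : (Fin n → Bool) → Fin n → Bool := fun x v =>
  x v || getNode n x (((v : ℕ) + 1) / 2) || getNode n x (2 * ((v : ℕ) + 1)) ||
    getNode n x (2 * ((v : ℕ) + 1) + 1)

open Filter Asymptotics in
private lemma poly_lt_two_pow (C k : ℕ) : ∃ M : ℕ, ∀ L, M ≤ L → C * (L + 1) ^ k < 2 ^ L := by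
  have h : (fun n : ℕ => (n : ℝ) ^ k) =o[atTop] fun n : ℕ => (2:ℝ) ^ n :=
    isLittleO_pow_const_const_pow_of_one_lt k (by norm_num)
  have hb := h.def (c := 1 / (4 * (C + 1))) (by positivity)
  rw [Filter.eventually_atTop] at hb
  obtain ⟨M, hM⟩ := hb
  refine ⟨M, fun L hL => ?_⟩
  have h1 := hM (L + 1) (hL.trans (Nat.le_succ L))
  have hC1 : (0:ℝ) < (C:ℝ) + 1 := by positivity
  rw [Real.norm_eq_abs, Real.norm_eq_abs, abs_of_nonneg (by positivity),
    abs_of_nonneg (by positivity)] at h1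
  have key : (C : ℝ) * ((L:ℝ) + 1) ^ k < 2 ^ L := by
    have h2 : (C:ℝ) * ((L:ℝ)+1)^k ≤ (C:ℝ) * (1 / (4 * ((C:ℝ) + 1)) * 2 ^ (L+1)) := by
      have := mul_le_mul_of_nonneg_left h1 (by positivity : (0:ℝ) ≤ (C:ℝ))
      push_cast at this ⊢
      linarith
    have h3 : (C:ℝ) * (1 / (4 * ((C:ℝ) + 1)) * 2 ^ (L+1)) < 2 ^ L := by
      have h2L : (0:ℝ) < 2 ^ L := by positivity
      have e : (2:ℝ) ^ (L + 1) = 2 * 2 ^ L := by rw [pow_succ]; ring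
      rw [e]
      have hlt : (C:ℝ) * (1 / (4 * ((C:ℝ) + 1))) < 1 / 2 := by
        rw [mul_one_div, div_lt_div_iff₀ (by positivity) (by norm_num)]
        nlinarith
      calc (C:ℝ) * (1 / (4 * ((C:ℝ) + 1)) * (2 * 2 ^ L))
          = ((C:ℝ) * (1 / (4 * ((C:ℝ) + 1)))) * (2 * 2 ^ L) := by ring
        _ < (1 / 2) * (2 * 2 ^ L) := by
            exact mul_lt_mul_of_pos_right hlt (by positivity)
        _ = 2 ^ L := by ring
    linarith
  have : ((C * (L + 1) ^ k : ℕ) : ℝ) < ((2 ^ L : ℕ) : ℝ) := by push_cast; exact key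
  exact_mod_cast this

private lemma getNode_eq (n : ℕ) (x : Fin n → Bool) (m : ℕ) (h1 : 1 ≤ m) (h2 : m ≤ n) :
    getNode n x m = x ⟨m - 1, by omega⟩ := by
  simp [getNode, h1, h2]

private lemma treeNet_getNode (n : ℕ) (x : Fin n → Bool) (m : ℕ) (h1 : 1 ≤ m) (h2 : m ≤ n) :
    getNode n (treeNet n x) m =
      (getNode n x m || getNode n x (m / 2) || getNode n x (2 * m) ||
        getNode n x (2 * m + 1)) := by
  rw [getNode_eq n _ m h1 h2, getNode_eq n x m h1 h2]
  show treeNet n x ⟨m - 1, by omega⟩ = _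
  unfold treeNet
  have e : (((⟨m - 1, by omega⟩ : Fin n) : ℕ) + 1) = m := by simp; omega
  rw [e]

private lemma treeNet_false (n : ℕ) : treeNet n (fun _ => false) = fun _ => false := by
  funext v
  simp [treeNet, getNode]

private lemma treeNet_iter_false (n : ℕ) (s : ℕ) :
    (treeNet n)^[s] (fun _ => false) = fun _ => false := by
  induction s with
  | zero => rfl
  | succ s ih => rw [Function.iterate_succ_apply, treeNet_false, ih]

private lemma reach_root (n : ℕ) : ∀ s (x : Fin n → Bool) (m : ℕ), 1 ≤ m → m ≤ n → m ≤ 2 ^ s →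
    getNode n x m = true → getNode n ((treeNet n)^[s] x) 1 = true := by
  intro s
  induction s with
  | zero =>
    intro x m h1 h2 hs hx
    interval_cases m
    simpa using hx
  | succ s ih =>
    intro x m h1 h2 hs hx
    rw [Function.iterate_succ_apply]
    rcases eq_or_lt_of_le h1 with h | h
    · apply ih (treeNet n x) 1 le_rfl (by omega) (Nat.one_le_two_pow)
      rw [treeNet_getNode n x 1 le_rfl (by omega)]
      rw [← h] at hx
      simp [hx]
    · have hm2 : 2 ≤ m := h
      apply ih (treeNet n x) (m / 2) (by omega) (by omega) (by
        have : m ≤ 2 ^ (s + 1) := hs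
        rw [pow_succ] at this
        omega)
      rw [treeNet_getNode n x (m / 2) (by omega) (by omega)]
      have : m = 2 * (m / 2) ∨ m = 2 * (m / 2) + 1 := by omega
      rcases this with h' | h' <;> rw [← h', hx] <;> simp

/-- **Polynomial ball growth forbids constant-rescaling simulation of binary trees**
(core of the theorem that no family of polynomial ball growth is strongly universal).
Fix `α, c, k ≥ 1`.  For all large enough `n`, there is no finite alphabet `Q`, finite
simple graph `H` on a vertex set `W` with `|W| ≤ α·n` whose balls satisfy
`|B(X,t)| ≤ c·t^k` whenever `|X| ≤ α` and `t ≥ 1` (the ball being the set of vertices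
reachable from `X` by a walk of length ≤ t), automata network `G` on `W` local with
respect to `H`, and block embedding `φ` of `(Fin n → Bool)` into `(W → Q)` with
time constant `T`, `1 ≤ T ≤ α`, such that `φ ∘ F0 = G^T ∘ φ`, where `F0` is the
disjunctive network with self-loops on the complete binary tree with `n` nodes. -/
theorem no_simulation_of_tree_with_polynomial_ball_growth
    (α c k : ℕ) (hα : 1 ≤ α) (hc : 1 ≤ c) (hk : 1 ≤ k) :
    ∃ N : ℕ, ∀ n : ℕ, N ≤ n →
      ¬ ∃ (Q : Type) (_ : Finite Q) (W : Type) (_ : Finite W)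
          (H : SimpleGraph W) (G : (W → Q) → (W → Q))
          (B : BlockEmbedding Bool Q (Fin n) W) (T : ℕ),
          Nat.card W ≤ α * n ∧
          (∀ X : Set W, Nat.card X ≤ α → ∀ t : ℕ, 1 ≤ t →
            Nat.card {w : W | ∃ u ∈ X, ∃ p : H.Walk u w, p.length ≤ t} ≤ c * t ^ k) ∧
          (∀ (x y : W → Q) (w : W),
            (∀ u, (u = w ∨ H.Adj u w) → x u = y u) → G x w = G y w) ∧
          1 ≤ T ∧ T ≤ α ∧
          (∀ x : Fin n → Bool, B.toFun (treeNet n x) = G^[T] (B.toFun x)) := by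
  obtain ⟨M, hM⟩ := poly_lt_two_pow (c * α ^ k) k
  refine ⟨2 ^ M + 1, fun n hn => ?_⟩
  rintro ⟨Q, _, W, _, H, G, B, T, hW, hball, hloc, hT1, hTα, hsim⟩
  have hMn : 2 ^ M ≤ n := by omega
  have hn0 : n ≠ 0 := by
    have := Nat.one_le_two_pow (n := M)
    omega
  have hnpos : 0 < n := Nat.pos_of_ne_zero hn0
  set L := Nat.log 2 n with hL
  set t := L + 1 with ht
  have hML : M ≤ L := (Nat.le_log_iff_pow_le (by norm_num) hn0).mpr hMn
  have h2L : 2 ^ L ≤ n := Nat.pow_log_le_self 2 hn0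
  have hn2t : n < 2 ^ t := Nat.lt_pow_succ_log_self (by norm_num) n
  have hkey : c * α ^ k * t ^ k < n := lt_of_lt_of_le (hM L hML) h2L
  -- iterated simulation
  have hsim' : ∀ s x, B.toFun ((treeNet n)^[s] x) = G^[T * s] (B.toFun x) := by
    intro s
    induction s with
    | zero => intro x; simp
    | succ s ih =>
      intro x
      rw [Function.iterate_succ_apply, ih (treeNet n x), hsim x,
        ← Function.iterate_add_apply]
      have e : T * s + T = T * (s + 1) := by ring
      rw [e]
  -- iterated locality
  have hloc' : ∀ r (x y : W → Q) (w : W),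
      (∀ u, (∃ p : H.Walk u w, p.length ≤ r) → x u = y u) → G^[r] x w = G^[r] y w := by
    intro r
    induction r with
    | zero =>
      intro x y w h
      exact h w ⟨SimpleGraph.Walk.nil, by simp⟩
    | succ r ih =>
      intro x y w h
      rw [Function.iterate_succ_apply', Function.iterate_succ_apply']
      apply hloc
      intro u hu
      apply ih
      rintro u' ⟨p, hp⟩
      rcases hu with rfl | hadj
      · exact h u' ⟨p, by omega⟩
      · exact h u' ⟨p.concat hadj, by rw [SimpleGraph.Walk.length_concat]; omega⟩
  -- a distinguishing vertex in the root block
  have hroot : ∃ w0, B.blk w0 = ⟨0, hnpos⟩ ∧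
      B.pat ⟨0, hnpos⟩ true w0 ≠ B.pat ⟨0, hnpos⟩ false w0 := by
    by_contra hcon
    push_neg at hcon
    have := B.pat_inj ⟨0, hnpos⟩ true false (fun w hw => hcon w hw)
    simp at this
  obtain ⟨w0, hw0blk, hw0ne⟩ := hroot
  -- each block meets the ball of radius T*t around w0
  have hwit : ∀ v : Fin n, ∃ u : W, B.blk u = v ∧
      ∃ p : H.Walk w0 u, p.length ≤ T * t := by
    intro v
    set xv : Fin n → Bool := fun u => if u = v then true else false with hxv
    have hx : getNode n xv ((v : ℕ) + 1) = true := by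
      rw [getNode_eq n xv _ (by omega) (by omega : (v : ℕ) + 1 ≤ n)]
      have : (⟨(v : ℕ) + 1 - 1, by omega⟩ : Fin n) = v := by
        apply Fin.ext
        simp
      rw [this]
      simp [hxv]
    have hreach : getNode n ((treeNet n)^[t] xv) 1 = true :=
      reach_root n t xv ((v : ℕ) + 1) (by omega) (by omega)
        (by omega) hx
    have hrootval : ((treeNet n)^[t] xv) ⟨0, hnpos⟩ = true := by
      rw [getNode_eq n _ 1 le_rfl (by omega)] at hreach
      exact hreach
    have e1 : B.toFun ((treeNet n)^[t] xv) w0 = B.pat ⟨0, hnpos⟩ true w0 := by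
      unfold BlockEmbedding.toFun
      rw [hw0blk, hrootval]
    have e2 : B.toFun ((treeNet n)^[t] (fun _ => false)) w0
        = B.pat ⟨0, hnpos⟩ false w0 := by
      unfold BlockEmbedding.toFun
      rw [hw0blk, treeNet_iter_false]
    have hne : G^[T * t] (B.toFun xv) w0 ≠ G^[T * t] (B.toFun (fun _ => false)) w0 := by
      rw [← hsim' t xv, ← hsim' t (fun _ => false), e1, e2]
      exact hw0ne
    by_contra hcon
    push_neg at hcon
    apply hne
    apply hloc'
    rintro u ⟨p, hp⟩
    by_cases hbu : B.blk u = v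
    · exfalso
      have := hcon u hbu p.reverse
      rw [SimpleGraph.Walk.length_reverse] at this
      omega
    · unfold BlockEmbedding.toFun
      have : xv (B.blk u) = false := by simp [hxv, hbu]
      rw [this]
  choose g hg1 hg2 using hwit
  -- counting
  have hmem : ∀ v : Fin n,
      g v ∈ {w : W | ∃ u ∈ ({w0} : Set W), ∃ p : H.Walk u w, p.length ≤ T * t} := by
    intro v
    exact ⟨w0, Set.mem_singleton w0, hg2 v⟩
  have hinj : Function.Injective
      (fun v : Fin n =>
        (⟨g v, hmem v⟩ :
          {w : W | ∃ u ∈ ({w0} : Set W), ∃ p : H.Walk u w, p.length ≤ T * t})) := by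
    intro v v' hvv'
    have : g v = g v' := congrArg Subtype.val hvv'
    rw [← hg1 v, ← hg1 v', this]
  have hcard : n ≤ Nat.card
      {w : W | ∃ u ∈ ({w0} : Set W), ∃ p : H.Walk u w, p.length ≤ T * t} := by
    have := Nat.card_le_card_of_injective _ hinj
    exact (by simp : n = Nat.card (Fin n)).trans_le this
  have hX : Nat.card ({w0} : Set W) ≤ α := by
    rw [Nat.card_coe_set_eq, Set.ncard_singleton]
    exact hα
  have hTt : 1 ≤ T * t := Nat.one_le_iff_ne_zero.mpr (by positivity)
  have hbound := hball ({w0} : Set W) hX (T * t) hTt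
  have hmono : c * (T * t) ^ k ≤ c * α ^ k * t ^ k := by
    rw [mul_pow, ← mul_assoc]
    have : T ^ k ≤ α ^ k := Nat.pow_le_pow_left hTα k
    exact Nat.mul_le_mul_right _ (Nat.mul_le_mul_left _ this)
  omega
end

section
/- Let (G1, λ1, ρ1) and (G2, λ2, ρ2) be two CSANs over the same finite alphabet Q on disjoint finite vertex sets V1 and V2, with global maps F1 and F2. Let C = C1 ⊔ C2 be a finite set disjoint from V1 ∪ V2 and φ1 : C → V1, φ2 : C → V2 injective maps. Assume: (a) the labeled graphs induced on φ1(C) in G1 and on φ2(C) in G2 coincide under the identification φ1(v) ↔ φ2(v) (the same pairs are adjacent, corresponding vertices carry equal vertex labels, and corresponding edges carry equal edge labels); (b) every G1-neighbour of a vertex of φ1(C2) lies in φ1(C); (c) every G2-neighbour of a vertex of φ2(C1) lies in φ2(C). Then the glueing F' of F1 and F2 over C is itself the global map of a CSAN (G', λ', ρ') on V' = C ∪ (V1 ∖ φ1(C)) ∪ (V2 ∖ φ2(C)), where the edges of G' are: the edges induced on C via the common identification; the edges of G_i induced on V_i ∖ φ_i(C) (i = 1,2); and an edge {u, w} for each u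 ∈ C_i and w ∈ V_i ∖ φ_i(C) such that {φ_i(u), w} is an edge of G_i; with vertex label λ'(v) = λ_i(α(v)) (α being the identification of V' with vertices of G1 or G2) and edge labels inherited correspondingly. In particular, every vertex of G' has the same vertex label and the same collection of incident edge labels as some vertex of G1 or of G2. -/
open Classical in
noncomputable def glueAdj {U : Type*} (C1 C2 V1 V2 : Set U)
    (A1 A2 : U → U → Bool) (φ1 φ2 : U → U) : U → U → Bool := fun u w =>
  decide ((u ∈ C1 ∪ C2 ∧ w ∈ C1 ∪ C2 ∧ A1 (φ1 u) (φ1 w) = true) ∨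
     (u ∈ V1 \ φ1 '' (C1 ∪ C2) ∧ w ∈ V1 \ φ1 '' (C1 ∪ C2) ∧ A1 u w = true) ∨
     (u ∈ V2 \ φ2 '' (C1 ∪ C2) ∧ w ∈ V2 \ φ2 '' (C1 ∪ C2) ∧ A2 u w = true) ∨
     (u ∈ C1 ∧ w ∈ V1 \ φ1 '' (C1 ∪ C2) ∧ A1 (φ1 u) w = true) ∨
     (w ∈ C1 ∧ u ∈ V1 \ φ1 '' (C1 ∪ C2) ∧ A1 (φ1 w) u = true) ∨
     (u ∈ C2 ∧ w ∈ V2 \ φ2 '' (C1 ∪ C2) ∧ A2 (φ2 u) w = true) ∨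
     (w ∈ C2 ∧ u ∈ V2 \ φ2 '' (C1 ∪ C2) ∧ A2 (φ2 w) u = true))

lemma glueAdj_eq_true {U : Type*} (C1 C2 V1 V2 : Set U)
    (A1 A2 : U → U → Bool) (φ1 φ2 : U → U) (u w : U) :
    glueAdj C1 C2 V1 V2 A1 A2 φ1 φ2 u w = true ↔
    ((u ∈ C1 ∪ C2 ∧ w ∈ C1 ∪ C2 ∧ A1 (φ1 u) (φ1 w) = true) ∨
     (u ∈ V1 \ φ1 '' (C1 ∪ C2) ∧ w ∈ V1 \ φ1 '' (C1 ∪ C2) ∧ A1 u w = true) ∨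
     (u ∈ V2 \ φ2 '' (C1 ∪ C2) ∧ w ∈ V2 \ φ2 '' (C1 ∪ C2) ∧ A2 u w = true) ∨
     (u ∈ C1 ∧ w ∈ V1 \ φ1 '' (C1 ∪ C2) ∧ A1 (φ1 u) w = true) ∨
     (w ∈ C1 ∧ u ∈ V1 \ φ1 '' (C1 ∪ C2) ∧ A1 (φ1 w) u = true) ∨
     (u ∈ C2 ∧ w ∈ V2 \ φ2 '' (C1 ∪ C2) ∧ A2 (φ2 u) w = true) ∨
     (w ∈ C2 ∧ u ∈ V2 \ φ2 '' (C1 ∪ C2) ∧ A2 (φ2 w) u = true)) := by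
  simp [glueAdj]

open Classical in
noncomputable def glueEdge {U Q : Type*} (C1 C2 V2 : Set U) (φ1 φ2 : U → U)
    (edge1 edge2 : U → U → Q → Q) : U → U → Q → Q := fun u w =>
  if u ∈ C1 ∪ C2 ∧ w ∈ C1 ∪ C2 then edge1 (φ1 u) (φ1 w)
  else if u ∈ C1 ∧ w ∉ C1 ∪ C2 then edge1 (φ1 u) w
  else if w ∈ C1 ∧ u ∉ C1 ∪ C2 then edge1 (φ1 w) u
  else if u ∈ C2 ∧ w ∉ C1 ∪ C2 then edge2 (φ2 u) w
  else if w ∈ C2 ∧ u ∉ C1 ∪ C2 then edge2 (φ2 w) u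
  else if u ∈ V2 ∧ w ∈ V2 then edge2 u w
  else edge1 u w

open Classical in
noncomputable def glueLab {U Q : Type*} (C1 C2 V1 : Set U) (φ1 : U → U)
    (lab1 lab2 : U → Q × Multiset Q → Q) : U → Q × Multiset Q → Q := fun v =>
  if v ∈ C1 ∪ C2 then lab1 (φ1 v) else if v ∈ V1 then lab1 v else lab2 v

lemma key_multiset {U X : Type*} [Fintype U] [DecidableEq U]
    (p q : U → Prop) [DecidablePred p] [DecidablePred q]
    (β : U → U) (f g : U → X)
    (hinj : ∀ u1 u2, p u1 → p u2 → β u1 = β u2 → u1 = u2)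
    (hmaps : ∀ u, p u → q (β u))
    (hsurj : ∀ u', q u' → ∃ u, p u ∧ β u = u')
    (hf : ∀ u, p u → f u = g (β u)) :
    (Finset.univ.filter p).val.map f = (Finset.univ.filter q).val.map g := by
  have himg : (Finset.univ.filter p).image β = Finset.univ.filter q := by
    ext u'
    simp only [Finset.mem_image, Finset.mem_filter, Finset.mem_univ, true_and]
    constructor
    · rintro ⟨u, hu, rfl⟩; exact hmaps u hu
    · exact hsurj u'
  have hval : ((Finset.univ.filter p).image β).val = (Finset.univ.filter p).val.map β :=
    Finset.image_val_of_injOn (fun u1 h1 u2 h2 h =>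
      hinj u1 u2 (by simpa using h1) (by simpa using h2) h)
  rw [← himg, hval, Multiset.map_map]
  exact Multiset.map_congr rfl (fun u hu =>
    hf u (by simpa using (Finset.mem_filter.mp (Finset.mem_val.mp hu)).2))

open Classical in
noncomputable def glueβ {U : Type*} (C : Set U) (φ : U → U) : U → U :=
  fun u => if u ∈ C then φ u else u

lemma glueβ_mem {U : Type*} (C : Set U) (φ : U → U) {u : U} (h : u ∈ C) :
    glueβ C φ u = φ u := if_pos h

lemma glueβ_not {U : Type*} (C : Set U) (φ : U → U) {u : U} (h : u ∉ C) :
    glueβ C φ u = u := if_neg h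



/-- Global map of a CSAN given, over an ambient finite vertex type `U`, by a Boolean
adjacency `A`, vertex labels `lab : U → (Q × Multiset Q → Q)` and edge labels
`edge : U → U → (Q → Q)`:
`F(x)_v = λ_v (x_v, multiset of ρ_{{u,v}}(x_u) over the neighbours u of v)`. -/
def csanMap {U Q : Type*} [Fintype U] (A : U → U → Bool)
    (lab : U → Q × Multiset Q → Q) (edge : U → U → Q → Q) :
    (U → Q) → U → Q :=
  fun x v =>
    lab v (x v,
      (Finset.univ.filter fun u => A u v = true).val.map fun u => edge u v (x u))

/-- The multiset of labels of the edges incident to `v`. -/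
def incidentLabels {U Q : Type*} [Fintype U] (A : U → U → Bool)
    (edge : U → U → Q → Q) (v : U) : Multiset (Q → Q) :=
  (Finset.univ.filter fun u => A u v = true).val.map fun u => edge u v


open Classical in
lemma glueEdge_oo {U Q : Type*} {C1 C2 V2 : Set U} (φ1 φ2 : U → U)
    (edge1 edge2 : U → U → Q → Q) {u w : U}
    (hu : u ∉ C1 ∪ C2) (hw : w ∉ C1 ∪ C2) :
    glueEdge C1 C2 V2 φ1 φ2 edge1 edge2 u w
      = if u ∈ V2 ∧ w ∈ V2 then edge2 u w else edge1 u w := by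
  unfold glueEdge
  rw [if_neg (fun hh => hu hh.1), if_neg (fun hh => hu (Or.inl hh.1)),
    if_neg (fun hh => hw (Or.inl hh.1)), if_neg (fun hh => hu (Or.inr hh.1)),
    if_neg (fun hh => hw (Or.inr hh.1))]

lemma glueEdge_C1o {U Q : Type*} {C1 C2 V2 : Set U} (φ1 φ2 : U → U)
    (edge1 edge2 : U → U → Q → Q) {u w : U}
    (hu : u ∈ C1) (hw : w ∉ C1 ∪ C2) :
    glueEdge C1 C2 V2 φ1 φ2 edge1 edge2 u w = edge1 (φ1 u) w := by
  unfold glueEdge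
  rw [if_neg (fun hh => hw hh.2), if_pos ⟨hu, hw⟩]

lemma glueEdge_oC1 {U Q : Type*} {C1 C2 V2 : Set U} (φ1 φ2 : U → U)
    (edge1 edge2 : U → U → Q → Q) {u w : U}
    (hw : w ∈ C1) (hu : u ∉ C1 ∪ C2) :
    glueEdge C1 C2 V2 φ1 φ2 edge1 edge2 u w = edge1 (φ1 w) u := by
  unfold glueEdge
  rw [if_neg (fun hh => hu hh.1), if_neg (fun hh => hu (Or.inl hh.1)),
    if_pos ⟨hw, hu⟩]

lemma glueEdge_C2o {U Q : Type*} {C1 C2 V2 : Set U} (φ1 φ2 : U → U)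
    (edge1 edge2 : U → U → Q → Q) {u w : U}
    (hu : u ∈ C2) (hu1 : u ∉ C1) (hw : w ∉ C1 ∪ C2) :
    glueEdge C1 C2 V2 φ1 φ2 edge1 edge2 u w = edge2 (φ2 u) w := by
  unfold glueEdge
  rw [if_neg (fun hh => hw hh.2), if_neg (fun hh => hu1 hh.1),
    if_neg (fun hh => hw (Or.inl hh.1)), if_pos ⟨hu, hw⟩]

lemma glueEdge_oC2 {U Q : Type*} {C1 C2 V2 : Set U} (φ1 φ2 : U → U)
    (edge1 edge2 : U → U → Q → Q) {u w : U}
    (hw : w ∈ C2) (hw1 : w ∉ C1) (hu : u ∉ C1 ∪ C2) :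
    glueEdge C1 C2 V2 φ1 φ2 edge1 edge2 u w = edge2 (φ2 w) u := by
  unfold glueEdge
  rw [if_neg (fun hh => hu hh.1), if_neg (fun hh => hu (Or.inl hh.1)),
    if_neg (fun hh => hw1 hh.1), if_neg (fun hh => hu (Or.inr hh.1)),
    if_pos ⟨hw, hu⟩]

lemma glueEdge_symm {U Q : Type*} {C1 C2 V2 : Set U} (φ1 φ2 : U → U)
    (edge1 edge2 : U → U → Q → Q) (hC12 : Disjoint C1 C2)
    (hedge1symm : ∀ u v, edge1 u v = edge1 v u)
    (hedge2symm : ∀ u v, edge2 u v = edge2 v u) (u w : U) :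
    glueEdge C1 C2 V2 φ1 φ2 edge1 edge2 u w
      = glueEdge C1 C2 V2 φ1 φ2 edge1 edge2 w u := by
  by_cases hu : u ∈ C1 ∪ C2 <;> by_cases hw : w ∈ C1 ∪ C2
  · unfold glueEdge; rw [if_pos ⟨hu, hw⟩, if_pos ⟨hw, hu⟩]; exact hedge1symm _ _
  · rcases hu with hu1 | hu2
    · rw [glueEdge_C1o φ1 φ2 edge1 edge2 hu1 hw, glueEdge_oC1 φ1 φ2 edge1 edge2 hu1 hw]
    · have hu1 : u ∉ C1 := Set.disjoint_right.mp hC12 hu2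
      rw [glueEdge_C2o φ1 φ2 edge1 edge2 hu2 hu1 hw, glueEdge_oC2 φ1 φ2 edge1 edge2 hu2 hu1 hw]
  · rcases hw with hw1 | hw2
    · rw [glueEdge_oC1 φ1 φ2 edge1 edge2 hw1 hu, glueEdge_C1o φ1 φ2 edge1 edge2 hw1 hu]
    · have hw1 : w ∉ C1 := Set.disjoint_right.mp hC12 hw2
      rw [glueEdge_oC2 φ1 φ2 edge1 edge2 hw2 hw1 hu, glueEdge_C2o φ1 φ2 edge1 edge2 hw2 hw1 hu]
  · rw [glueEdge_oo φ1 φ2 edge1 edge2 hu hw, glueEdge_oo φ1 φ2 edge1 edge2 hw hu]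
    by_cases h2 : u ∈ V2 ∧ w ∈ V2
    · rw [if_pos h2, if_pos ⟨h2.2, h2.1⟩]; exact hedge2symm _ _
    · rw [if_neg h2, if_neg (fun hh => h2 ⟨hh.2, hh.1⟩)]; exact hedge1symm _ _

set_option maxHeartbeats 2000000 in
/-- **Glueing of CSANs** (paper's Lemma on glueing for CSAN).  Let `(G1,λ1,ρ1)` and
`(G2,λ2,ρ2)` be CSANs over the same finite alphabet `Q` on disjoint vertex sets
`V1, V2`, let `C = C1 ⊔ C2` be disjoint from `V1 ∪ V2` with injections
`φ1 : C → V1`, `φ2 : C → V2`, and assume: (a) the labeled graphs induced on `φ1(C)`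
and `φ2(C)` coincide under the identification `φ1(v) ↔ φ2(v)`; (b) every
`G1`-neighbour of `φ1(C2)` lies in `φ1(C)`; (c) every `G2`-neighbour of `φ2(C1)`
lies in `φ2(C)`.  Then the glueing `F'` of the global maps `F1, F2` over `C`
(characterized by the hypotheses on `α`, `ρ1', ρ2'`, `F'` below) is itself the global
map of a CSAN `(G',λ',ρ')` on `V' = C ∪ (V1 ∖ φ1(C)) ∪ (V2 ∖ φ2(C))` with the edges
and labels described in the conclusion; in particular every vertex of `G'` carries the
same vertex label and the same multiset of incident edge labels as some vertex of
`G1` or of `G2`. -/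
theorem csan_glueing {U Q : Type*} [Fintype U] [Finite Q]
    (V1 V2 C1 C2 : Set U)
    (hV12 : Disjoint V1 V2)
    (hCV1 : Disjoint (C1 ∪ C2) V1) (hCV2 : Disjoint (C1 ∪ C2) V2)
    (hC12 : Disjoint C1 C2)
    (A1 A2 : U → U → Bool)
    (lab1 lab2 : U → Q × Multiset Q → Q)
    (edge1 edge2 : U → U → Q → Q)
    (hA1symm : ∀ u v, A1 u v = A1 v u) (hA2symm : ∀ u v, A2 u v = A2 v u)
    (hA1loop : ∀ v, A1 v v = false) (hA2loop : ∀ v, A2 v v = false)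
    (hA1supp : ∀ u v, A1 u v = true → u ∈ V1 ∧ v ∈ V1)
    (hA2supp : ∀ u v, A2 u v = true → u ∈ V2 ∧ v ∈ V2)
    (hedge1symm : ∀ u v, edge1 u v = edge1 v u)
    (hedge2symm : ∀ u v, edge2 u v = edge2 v u)
    (φ1 φ2 : U → U)
    (hφ1inj : Set.InjOn φ1 (C1 ∪ C2)) (hφ2inj : Set.InjOn φ2 (C1 ∪ C2))
    (hφ1maps : Set.MapsTo φ1 (C1 ∪ C2) V1) (hφ2maps : Set.MapsTo φ2 (C1 ∪ C2) V2)
    -- (a) the induced labeled graphs on the two copies of `C` coincide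
    (haAdj : ∀ u ∈ C1 ∪ C2, ∀ w ∈ C1 ∪ C2, A1 (φ1 u) (φ1 w) = A2 (φ2 u) (φ2 w))
    (haLab : ∀ u ∈ C1 ∪ C2, lab1 (φ1 u) = lab2 (φ2 u))
    (haEdge : ∀ u ∈ C1 ∪ C2, ∀ w ∈ C1 ∪ C2,
      A1 (φ1 u) (φ1 w) = true → edge1 (φ1 u) (φ1 w) = edge2 (φ2 u) (φ2 w))
    -- (b) and (c)
    (hb : ∀ u ∈ C2, ∀ w, A1 w (φ1 u) = true → w ∈ φ1 '' (C1 ∪ C2))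
    (hc : ∀ u ∈ C1, ∀ w, A2 w (φ2 u) = true → w ∈ φ2 '' (C1 ∪ C2))
    -- the glueing data
    (V' : Set U)
    (hV' : V' = (C1 ∪ C2) ∪ (V1 \ φ1 '' (C1 ∪ C2)) ∪ (V2 \ φ2 '' (C1 ∪ C2)))
    (α : U → U)
    (hα1 : ∀ v ∈ C1, α v = φ1 v) (hα2 : ∀ v ∈ C2, α v = φ2 v)
    (hα3 : ∀ v, v ∉ C1 ∪ C2 → α v = v)
    (ρ1' ρ2' : (U → Q) → (U → Q))
    (hρ1C : ∀ (x : U → Q), ∀ c ∈ C1 ∪ C2, ρ1' x (φ1 c) = x c)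
    (hρ1o : ∀ (x : U → Q), ∀ v, v ∉ φ1 '' (C1 ∪ C2) → ρ1' x v = x v)
    (hρ2C : ∀ (x : U → Q), ∀ c ∈ C1 ∪ C2, ρ2' x (φ2 c) = x c)
    (hρ2o : ∀ (x : U → Q), ∀ v, v ∉ φ2 '' (C1 ∪ C2) → ρ2' x v = x v)
    (F' : (U → Q) → (U → Q))
    (hF'1 : ∀ (x : U → Q), ∀ v ∈ V', α v ∈ V1 →
      F' x v = csanMap A1 lab1 edge1 (ρ1' x) (α v))
    (hF'2 : ∀ (x : U → Q), ∀ v ∈ V', α v ∈ V2 →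
      F' x v = csanMap A2 lab2 edge2 (ρ2' x) (α v)) :
    ∃ (A' : U → U → Bool) (lab' : U → Q × Multiset Q → Q) (edge' : U → U → Q → Q),
      -- `(G',λ',ρ')` is a CSAN: symmetric adjacency and edge labels
      (∀ u w, A' u w = A' w u) ∧
      (∀ u w, edge' u w = edge' w u) ∧
      -- the edges of `G'` are exactly as described
      (∀ u w, A' u w = true ↔
        ((u ∈ C1 ∪ C2 ∧ w ∈ C1 ∪ C2 ∧ A1 (φ1 u) (φ1 w) = true) ∨
         (u ∈ V1 \ φ1 '' (C1 ∪ C2) ∧ w ∈ V1 \ φ1 '' (C1 ∪ C2) ∧ A1 u w = true) ∨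
         (u ∈ V2 \ φ2 '' (C1 ∪ C2) ∧ w ∈ V2 \ φ2 '' (C1 ∪ C2) ∧ A2 u w = true) ∨
         (u ∈ C1 ∧ w ∈ V1 \ φ1 '' (C1 ∪ C2) ∧ A1 (φ1 u) w = true) ∨
         (w ∈ C1 ∧ u ∈ V1 \ φ1 '' (C1 ∪ C2) ∧ A1 (φ1 w) u = true) ∨
         (u ∈ C2 ∧ w ∈ V2 \ φ2 '' (C1 ∪ C2) ∧ A2 (φ2 u) w = true) ∨
         (w ∈ C2 ∧ u ∈ V2 \ φ2 '' (C1 ∪ C2) ∧ A2 (φ2 w) u = true))) ∧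
      -- vertex labels: `λ'(v) = λ_i(α(v))`
      (∀ v ∈ V', (α v ∈ V1 → lab' v = lab1 (α v)) ∧ (α v ∈ V2 → lab' v = lab2 (α v))) ∧
      -- edge labels are inherited correspondingly
      (∀ u w,
        (u ∈ C1 ∪ C2 → w ∈ C1 ∪ C2 → edge' u w = edge1 (φ1 u) (φ1 w)) ∧
        (u ∈ V1 \ φ1 '' (C1 ∪ C2) → w ∈ V1 \ φ1 '' (C1 ∪ C2) → edge' u w = edge1 u w) ∧
        (u ∈ V2 \ φ2 '' (C1 ∪ C2) → w ∈ V2 \ φ2 '' (C1 ∪ C2) → edge' u w = edge2 u w) ∧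
        (u ∈ C1 → w ∈ V1 \ φ1 '' (C1 ∪ C2) → edge' u w = edge1 (φ1 u) w) ∧
        (u ∈ C2 → w ∈ V2 \ φ2 '' (C1 ∪ C2) → edge' u w = edge2 (φ2 u) w)) ∧
      -- `F'` is the global map of the CSAN `(G',λ',ρ')` on `V'`
      (∀ (x : U → Q), ∀ v ∈ V', F' x v = csanMap A' lab' edge' x v) ∧
      -- every vertex of `G'` looks like a vertex of `G1` or of `G2`
      (∀ v ∈ V',
        (∃ u ∈ V1, lab' v = lab1 u ∧
          incidentLabels A' edge' v = incidentLabels A1 edge1 u) ∨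
        (∃ u ∈ V2, lab' v = lab2 u ∧
          incidentLabels A' edge' v = incidentLabels A2 edge2 u)) := by
  classical
  have hsub1 : ∀ u, u ∈ C1 → u ∈ C1 ∪ C2 := fun u h => Or.inl h
  have hsub2 : ∀ u, u ∈ C2 → u ∈ C1 ∪ C2 := fun u h => Or.inr h
  have hnCV1 : ∀ u, u ∈ V1 → u ∉ C1 ∪ C2 := fun u h hc => Set.disjoint_left.mp hCV1 hc h
  have hnCV2 : ∀ u, u ∈ V2 → u ∉ C1 ∪ C2 := fun u h hc => Set.disjoint_left.mp hCV2 hc h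
  have hnV12 : ∀ u, u ∈ V1 → u ∉ V2 := fun u h h2 => Set.disjoint_left.mp hV12 h h2
  have h12 : ∀ u, u ∈ C1 → u ∉ C2 := fun u h h2 => Set.disjoint_left.mp hC12 h h2
  -- the master fact: on `V'`, `F'` agrees with the glued CSAN, and every vertex
  -- looks like a vertex of `G1` or `G2`.
  have master : ∀ v ∈ V',
      (∀ x : U → Q, F' x v = csanMap (glueAdj C1 C2 V1 V2 A1 A2 φ1 φ2)
          (glueLab C1 C2 V1 φ1 lab1 lab2) (glueEdge C1 C2 V2 φ1 φ2 edge1 edge2) x v) ∧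
      ((∃ u ∈ V1, glueLab C1 C2 V1 φ1 lab1 lab2 v = lab1 u ∧
          incidentLabels (glueAdj C1 C2 V1 V2 A1 A2 φ1 φ2)
            (glueEdge C1 C2 V2 φ1 φ2 edge1 edge2) v = incidentLabels A1 edge1 u) ∨
       (∃ u ∈ V2, glueLab C1 C2 V1 φ1 lab1 lab2 v = lab2 u ∧
          incidentLabels (glueAdj C1 C2 V1 V2 A1 A2 φ1 φ2)
            (glueEdge C1 C2 V2 φ1 φ2 edge1 edge2) v = incidentLabels A2 edge2 u)) := by
    intro v hv
    have hv' := hv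
    rw [hV'] at hv'
    rcases hv' with (hC | hv1) | hv2
    · rcases hC with hc1 | hc2
      -- CASE 1 : v ∈ C1
      · have hvC : v ∈ C1 ∪ C2 := Or.inl hc1
        have hαv : α v = φ1 v := hα1 v hc1
        have hv1 : φ1 v ∈ V1 := hφ1maps hvC
        have hchar : ∀ u, glueAdj C1 C2 V1 V2 A1 A2 φ1 φ2 u v = true ↔
            ((u ∈ C1 ∪ C2 ∧ A1 (φ1 u) (φ1 v) = true) ∨
             (u ∈ V1 \ φ1 '' (C1 ∪ C2) ∧ A1 u (φ1 v) = true)) := by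
          intro u
          rw [glueAdj_eq_true]
          constructor
          · rintro (⟨h1,h2,h3⟩|⟨h1,h2,h3⟩|⟨h1,h2,h3⟩|⟨h1,h2,h3⟩|⟨h1,h2,h3⟩|⟨h1,h2,h3⟩|⟨h1,h2,h3⟩)
            · exact Or.inl ⟨h1, h3⟩
            · exact absurd hvC (hnCV1 v h2.1)
            · exact absurd hvC (hnCV2 v h2.1)
            · exact absurd hvC (hnCV1 v h2.1)
            · exact Or.inr ⟨h2, by rw [hA1symm]; exact h3⟩
            · exact absurd hvC (hnCV2 v h2.1)
            · exact absurd h1 (h12 v hc1)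
          · rintro (⟨h1,h2⟩|⟨h1,h2⟩)
            · exact Or.inl ⟨h1, hvC, h2⟩
            · exact Or.inr (Or.inr (Or.inr (Or.inr (Or.inl
                ⟨hc1, h1, by rw [hA1symm]; exact h2⟩))))
        have hinj : ∀ u1 u2, glueAdj C1 C2 V1 V2 A1 A2 φ1 φ2 u1 v = true →
            glueAdj C1 C2 V1 V2 A1 A2 φ1 φ2 u2 v = true →
            glueβ (C1 ∪ C2) φ1 u1 = glueβ (C1 ∪ C2) φ1 u2 → u1 = u2 := by
          intro u1 u2 h1 h2 heq
          rcases (hchar u1).mp h1 with ⟨hu1, _⟩ | ⟨hu1, _⟩ <;>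
            rcases (hchar u2).mp h2 with ⟨hu2, _⟩ | ⟨hu2, _⟩
          · rw [glueβ_mem _ _ hu1, glueβ_mem _ _ hu2] at heq; exact hφ1inj hu1 hu2 heq
          · rw [glueβ_mem _ _ hu1, glueβ_not _ _ (hnCV1 u2 hu2.1)] at heq
            exact absurd (by rw [← heq]; exact Set.mem_image_of_mem φ1 hu1) hu2.2
          · rw [glueβ_not _ _ (hnCV1 u1 hu1.1), glueβ_mem _ _ hu2] at heq
            exact absurd (by rw [heq]; exact Set.mem_image_of_mem φ1 hu2) hu1.2
          · rw [glueβ_not _ _ (hnCV1 u1 hu1.1), glueβ_not _ _ (hnCV1 u2 hu2.1)] at heq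
            exact heq
        have hmaps : ∀ u, glueAdj C1 C2 V1 V2 A1 A2 φ1 φ2 u v = true →
            A1 (glueβ (C1 ∪ C2) φ1 u) (φ1 v) = true := by
          intro u h
          rcases (hchar u).mp h with ⟨hu, ha⟩ | ⟨hu, ha⟩
          · rw [glueβ_mem _ _ hu]; exact ha
          · rw [glueβ_not _ _ (hnCV1 u hu.1)]; exact ha
        have hsurj : ∀ u', A1 u' (φ1 v) = true →
            ∃ u, glueAdj C1 C2 V1 V2 A1 A2 φ1 φ2 u v = true ∧
              glueβ (C1 ∪ C2) φ1 u = u' := by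
          intro u' h
          by_cases hI : u' ∈ φ1 '' (C1 ∪ C2)
          · obtain ⟨c, hcC, rfl⟩ := hI
            exact ⟨c, (hchar c).mpr (Or.inl ⟨hcC, h⟩), glueβ_mem _ _ hcC⟩
          · have hu'V1 : u' ∈ V1 := (hA1supp _ _ h).1
            exact ⟨u', (hchar u').mpr (Or.inr ⟨⟨hu'V1, hI⟩, h⟩),
              glueβ_not _ _ (hnCV1 _ hu'V1)⟩
        have hedge : ∀ u, glueAdj C1 C2 V1 V2 A1 A2 φ1 φ2 u v = true →
            glueEdge C1 C2 V2 φ1 φ2 edge1 edge2 u v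
              = edge1 (glueβ (C1 ∪ C2) φ1 u) (φ1 v) := by
          intro u h
          rcases (hchar u).mp h with ⟨hu, _⟩ | ⟨hu, _⟩
          · rw [glueβ_mem _ _ hu]; unfold glueEdge; rw [if_pos ⟨hu, hvC⟩]
          · have huC : u ∉ C1 ∪ C2 := hnCV1 u hu.1
            rw [glueβ_not _ _ huC]
            unfold glueEdge
            rw [if_neg (fun hh => huC hh.1), if_neg (fun hh => huC (Or.inl hh.1)),
              if_pos ⟨hc1, huC⟩]
            exact hedge1symm (φ1 v) u
        refine ⟨?_, Or.inl ⟨φ1 v, hv1, ?_, ?_⟩⟩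
        · intro x
          have hM := key_multiset
            (fun u => glueAdj C1 C2 V1 V2 A1 A2 φ1 φ2 u v = true)
            (fun u => A1 u (φ1 v) = true)
            (glueβ (C1 ∪ C2) φ1)
            (fun u => glueEdge C1 C2 V2 φ1 φ2 edge1 edge2 u v (x u))
            (fun u => edge1 u (φ1 v) (ρ1' x u))
            hinj hmaps hsurj
            (fun u hu => by
              show glueEdge C1 C2 V2 φ1 φ2 edge1 edge2 u v (x u)
                = edge1 (glueβ (C1 ∪ C2) φ1 u) (φ1 v) (ρ1' x (glueβ (C1 ∪ C2) φ1 u))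
              rw [hedge u hu]
              rcases (hchar u).mp hu with ⟨huC, _⟩ | ⟨huV, _⟩
              · rw [glueβ_mem _ _ huC, hρ1C x u huC]
              · rw [glueβ_not _ _ (hnCV1 u huV.1), hρ1o x u huV.2])
          rw [hF'1 x v hv (by rw [hαv]; exact hv1)]
          simp only [csanMap]
          rw [hαv, hρ1C x v hvC]
          unfold glueLab
          rw [if_pos hvC, ← hM]
        · unfold glueLab; rw [if_pos hvC]
        · unfold incidentLabels
          exact key_multiset _ _ (glueβ (C1 ∪ C2) φ1) _ _ hinj hmaps hsurj hedge
      -- CASE 2 : v ∈ C2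
      · have hvC : v ∈ C1 ∪ C2 := Or.inr hc2
        have hαv : α v = φ2 v := hα2 v hc2
        have hv2 : φ2 v ∈ V2 := hφ2maps hvC
        have hchar : ∀ u, glueAdj C1 C2 V1 V2 A1 A2 φ1 φ2 u v = true ↔
            ((u ∈ C1 ∪ C2 ∧ A1 (φ1 u) (φ1 v) = true) ∨
             (u ∈ V2 \ φ2 '' (C1 ∪ C2) ∧ A2 u (φ2 v) = true)) := by
          intro u
          rw [glueAdj_eq_true]
          constructor
          · rintro (⟨h1,h2,h3⟩|⟨h1,h2,h3⟩|⟨h1,h2,h3⟩|⟨h1,h2,h3⟩|⟨h1,h2,h3⟩|⟨h1,h2,h3⟩|⟨h1,h2,h3⟩)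
            · exact Or.inl ⟨h1, h3⟩
            · exact absurd hvC (hnCV1 v h2.1)
            · exact absurd hvC (hnCV2 v h2.1)
            · exact absurd hvC (hnCV1 v h2.1)
            · exact absurd hc2 (h12 v h1)
            · exact absurd hvC (hnCV2 v h2.1)
            · exact Or.inr ⟨h2, by rw [hA2symm]; exact h3⟩
          · rintro (⟨h1,h2⟩|⟨h1,h2⟩)
            · exact Or.inl ⟨h1, hvC, h2⟩
            · exact Or.inr (Or.inr (Or.inr (Or.inr (Or.inr (Or.inr
                ⟨hc2, h1, by rw [hA2symm]; exact h2⟩)))))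
        have hinj : ∀ u1 u2, glueAdj C1 C2 V1 V2 A1 A2 φ1 φ2 u1 v = true →
            glueAdj C1 C2 V1 V2 A1 A2 φ1 φ2 u2 v = true →
            glueβ (C1 ∪ C2) φ2 u1 = glueβ (C1 ∪ C2) φ2 u2 → u1 = u2 := by
          intro u1 u2 h1 h2 heq
          rcases (hchar u1).mp h1 with ⟨hu1, _⟩ | ⟨hu1, _⟩ <;>
            rcases (hchar u2).mp h2 with ⟨hu2, _⟩ | ⟨hu2, _⟩
          · rw [glueβ_mem _ _ hu1, glueβ_mem _ _ hu2] at heq; exact hφ2inj hu1 hu2 heq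
          · rw [glueβ_mem _ _ hu1, glueβ_not _ _ (hnCV2 u2 hu2.1)] at heq
            exact absurd (by rw [← heq]; exact Set.mem_image_of_mem φ2 hu1) hu2.2
          · rw [glueβ_not _ _ (hnCV2 u1 hu1.1), glueβ_mem _ _ hu2] at heq
            exact absurd (by rw [heq]; exact Set.mem_image_of_mem φ2 hu2) hu1.2
          · rw [glueβ_not _ _ (hnCV2 u1 hu1.1), glueβ_not _ _ (hnCV2 u2 hu2.1)] at heq
            exact heq
        have hmaps : ∀ u, glueAdj C1 C2 V1 V2 A1 A2 φ1 φ2 u v = true →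
            A2 (glueβ (C1 ∪ C2) φ2 u) (φ2 v) = true := by
          intro u h
          rcases (hchar u).mp h with ⟨hu, ha⟩ | ⟨hu, ha⟩
          · rw [glueβ_mem _ _ hu, ← haAdj u hu v hvC]; exact ha
          · rw [glueβ_not _ _ (hnCV2 u hu.1)]; exact ha
        have hsurj : ∀ u', A2 u' (φ2 v) = true →
            ∃ u, glueAdj C1 C2 V1 V2 A1 A2 φ1 φ2 u v = true ∧
              glueβ (C1 ∪ C2) φ2 u = u' := by
          intro u' h
          by_cases hI : u' ∈ φ2 '' (C1 ∪ C2)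
          · obtain ⟨c, hcC, rfl⟩ := hI
            exact ⟨c, (hchar c).mpr (Or.inl ⟨hcC, by rw [haAdj c hcC v hvC]; exact h⟩),
              glueβ_mem _ _ hcC⟩
          · have hu'V2 : u' ∈ V2 := (hA2supp _ _ h).1
            exact ⟨u', (hchar u').mpr (Or.inr ⟨⟨hu'V2, hI⟩, h⟩),
              glueβ_not _ _ (hnCV2 _ hu'V2)⟩
        have hedge : ∀ u, glueAdj C1 C2 V1 V2 A1 A2 φ1 φ2 u v = true →
            glueEdge C1 C2 V2 φ1 φ2 edge1 edge2 u v
              = edge2 (glueβ (C1 ∪ C2) φ2 u) (φ2 v) := by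
          intro u h
          rcases (hchar u).mp h with ⟨hu, ha⟩ | ⟨hu, _⟩
          · rw [glueβ_mem _ _ hu]; unfold glueEdge; rw [if_pos ⟨hu, hvC⟩]
            exact haEdge u hu v hvC ha
          · have huC : u ∉ C1 ∪ C2 := hnCV2 u hu.1
            rw [glueβ_not _ _ huC]
            unfold glueEdge
            rw [if_neg (fun hh => huC hh.1), if_neg (fun hh => huC (Or.inl hh.1)),
              if_neg (fun hh => h12 v hh.1 hc2), if_neg (fun hh => huC (Or.inr hh.1)),
              if_pos ⟨hc2, huC⟩]
            exact hedge2symm (φ2 v) u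
        refine ⟨?_, Or.inr ⟨φ2 v, hv2, ?_, ?_⟩⟩
        · intro x
          have hM := key_multiset
            (fun u => glueAdj C1 C2 V1 V2 A1 A2 φ1 φ2 u v = true)
            (fun u => A2 u (φ2 v) = true)
            (glueβ (C1 ∪ C2) φ2)
            (fun u => glueEdge C1 C2 V2 φ1 φ2 edge1 edge2 u v (x u))
            (fun u => edge2 u (φ2 v) (ρ2' x u))
            hinj hmaps hsurj
            (fun u hu => by
              show glueEdge C1 C2 V2 φ1 φ2 edge1 edge2 u v (x u)
                = edge2 (glueβ (C1 ∪ C2) φ2 u) (φ2 v) (ρ2' x (glueβ (C1 ∪ C2) φ2 u))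
              rw [hedge u hu]
              rcases (hchar u).mp hu with ⟨huC, _⟩ | ⟨huV, _⟩
              · rw [glueβ_mem _ _ huC, hρ2C x u huC]
              · rw [glueβ_not _ _ (hnCV2 u huV.1), hρ2o x u huV.2])
          rw [hF'2 x v hv (by rw [hαv]; exact hv2)]
          simp only [csanMap]
          rw [hαv, hρ2C x v hvC]
          unfold glueLab
          rw [if_pos hvC, haLab v hvC, ← hM]
        · unfold glueLab; rw [if_pos hvC]; exact haLab v hvC
        · unfold incidentLabels
          exact key_multiset _ _ (glueβ (C1 ∪ C2) φ2) _ _ hinj hmaps hsurj hedge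
    -- CASE 3 : v ∈ V1 \ φ1 '' (C1 ∪ C2)
    · have hvnC : v ∉ C1 ∪ C2 := hnCV1 v hv1.1
      have hαv : α v = v := hα3 v hvnC
      have hchar : ∀ u, glueAdj C1 C2 V1 V2 A1 A2 φ1 φ2 u v = true ↔
          ((u ∈ C1 ∧ A1 (φ1 u) v = true) ∨
           (u ∈ V1 \ φ1 '' (C1 ∪ C2) ∧ A1 u v = true)) := by
        intro u
        rw [glueAdj_eq_true]
        constructor
        · rintro (⟨h1,h2,h3⟩|⟨h1,h2,h3⟩|⟨h1,h2,h3⟩|⟨h1,h2,h3⟩|⟨h1,h2,h3⟩|⟨h1,h2,h3⟩|⟨h1,h2,h3⟩)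
          · exact absurd h2 hvnC
          · exact Or.inr ⟨h1, h3⟩
          · exact absurd h1.1 (fun hh => hnV12 v hv1.1 h2.1)
          · exact Or.inl ⟨h1, h3⟩
          · exact absurd h1 (fun hh => hvnC (Or.inl hh))
          · exact absurd h2.1 (hnV12 v hv1.1)
          · exact absurd h1 (fun hh => hvnC (Or.inr hh))
        · rintro (⟨h1,h2⟩|⟨h1,h2⟩)
          · exact Or.inr (Or.inr (Or.inr (Or.inl ⟨h1, hv1, h2⟩)))
          · exact Or.inr (Or.inl ⟨h1, hv1, h2⟩)
      have hinj : ∀ u1 u2, glueAdj C1 C2 V1 V2 A1 A2 φ1 φ2 u1 v = true →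
          glueAdj C1 C2 V1 V2 A1 A2 φ1 φ2 u2 v = true →
          glueβ (C1 ∪ C2) φ1 u1 = glueβ (C1 ∪ C2) φ1 u2 → u1 = u2 := by
        intro u1 u2 h1 h2 heq
        rcases (hchar u1).mp h1 with ⟨hu1, _⟩ | ⟨hu1, _⟩ <;>
          rcases (hchar u2).mp h2 with ⟨hu2, _⟩ | ⟨hu2, _⟩
        · rw [glueβ_mem _ _ (Set.mem_union_left _ hu1), glueβ_mem _ _ (Set.mem_union_left _ hu2)] at heq
          exact hφ1inj (Or.inl hu1) (Or.inl hu2) heq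
        · rw [glueβ_mem _ _ (Set.mem_union_left _ hu1), glueβ_not _ _ (hnCV1 u2 hu2.1)] at heq
          exact absurd (by rw [← heq]; exact Set.mem_image_of_mem φ1 (Or.inl hu1)) hu2.2
        · rw [glueβ_not _ _ (hnCV1 u1 hu1.1), glueβ_mem _ _ (Set.mem_union_left _ hu2)] at heq
          exact absurd (by rw [heq]; exact Set.mem_image_of_mem φ1 (Or.inl hu2)) hu1.2
        · rw [glueβ_not _ _ (hnCV1 u1 hu1.1), glueβ_not _ _ (hnCV1 u2 hu2.1)] at heq
          exact heq
      have hmaps : ∀ u, glueAdj C1 C2 V1 V2 A1 A2 φ1 φ2 u v = true →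
          A1 (glueβ (C1 ∪ C2) φ1 u) v = true := by
        intro u h
        rcases (hchar u).mp h with ⟨hu, ha⟩ | ⟨hu, ha⟩
        · rw [glueβ_mem _ _ (Set.mem_union_left _ hu)]; exact ha
        · rw [glueβ_not _ _ (hnCV1 u hu.1)]; exact ha
      have hsurj : ∀ u', A1 u' v = true →
          ∃ u, glueAdj C1 C2 V1 V2 A1 A2 φ1 φ2 u v = true ∧
            glueβ (C1 ∪ C2) φ1 u = u' := by
        intro u' h
        by_cases hI : u' ∈ φ1 '' (C1 ∪ C2)
        · obtain ⟨c, hcC, rfl⟩ := hI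
          rcases hcC with hcc1 | hcc2
          · exact ⟨c, (hchar c).mpr (Or.inl ⟨hcc1, h⟩), glueβ_mem _ _ (Set.mem_union_left _ hcc1)⟩
          · exact absurd (hb c hcc2 v (by rw [hA1symm]; exact h)) hv1.2
        · have hu'V1 : u' ∈ V1 := (hA1supp _ _ h).1
          exact ⟨u', (hchar u').mpr (Or.inr ⟨⟨hu'V1, hI⟩, h⟩),
            glueβ_not _ _ (hnCV1 _ hu'V1)⟩
      have hedge : ∀ u, glueAdj C1 C2 V1 V2 A1 A2 φ1 φ2 u v = true →
          glueEdge C1 C2 V2 φ1 φ2 edge1 edge2 u v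
            = edge1 (glueβ (C1 ∪ C2) φ1 u) v := by
        intro u h
        rcases (hchar u).mp h with ⟨hu, _⟩ | ⟨hu, _⟩
        · rw [glueβ_mem _ _ (Set.mem_union_left _ hu)]
          unfold glueEdge
          rw [if_neg (fun hh => hvnC hh.2), if_pos ⟨hu, hvnC⟩]
        · have huC : u ∉ C1 ∪ C2 := hnCV1 u hu.1
          rw [glueβ_not _ _ huC]
          unfold glueEdge
          rw [if_neg (fun hh => huC hh.1), if_neg (fun hh => huC (Or.inl hh.1)),
            if_neg (fun hh => hvnC (Or.inl hh.1)), if_neg (fun hh => huC (Or.inr hh.1)),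
            if_neg (fun hh => hvnC (Or.inr hh.1)),
            if_neg (fun hh => hnV12 v hv1.1 hh.2)]
      refine ⟨?_, Or.inl ⟨v, hv1.1, ?_, ?_⟩⟩
      · intro x
        have hM := key_multiset
          (fun u => glueAdj C1 C2 V1 V2 A1 A2 φ1 φ2 u v = true)
          (fun u => A1 u v = true)
          (glueβ (C1 ∪ C2) φ1)
          (fun u => glueEdge C1 C2 V2 φ1 φ2 edge1 edge2 u v (x u))
          (fun u => edge1 u v (ρ1' x u))
          hinj hmaps hsurj
          (fun u hu => by
            show glueEdge C1 C2 V2 φ1 φ2 edge1 edge2 u v (x u)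
              = edge1 (glueβ (C1 ∪ C2) φ1 u) v (ρ1' x (glueβ (C1 ∪ C2) φ1 u))
            rw [hedge u hu]
            rcases (hchar u).mp hu with ⟨huC, _⟩ | ⟨huV, _⟩
            · rw [glueβ_mem _ _ (Set.mem_union_left _ huC), hρ1C x u (Or.inl huC)]
            · rw [glueβ_not _ _ (hnCV1 u huV.1), hρ1o x u huV.2])
        rw [hF'1 x v hv (by rw [hαv]; exact hv1.1)]
        simp only [csanMap]
        rw [hαv, hρ1o x v hv1.2]
        unfold glueLab
        rw [if_neg hvnC, if_pos hv1.1, ← hM]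
      · unfold glueLab; rw [if_neg hvnC, if_pos hv1.1]
      · unfold incidentLabels
        exact key_multiset _ _ (glueβ (C1 ∪ C2) φ1) _ _ hinj hmaps hsurj hedge
    -- CASE 4 : v ∈ V2 \ φ2 '' (C1 ∪ C2)
    · have hvnC : v ∉ C1 ∪ C2 := hnCV2 v hv2.1
      have hvnV1 : v ∉ V1 := fun h => hnV12 v h hv2.1
      have hαv : α v = v := hα3 v hvnC
      have hchar : ∀ u, glueAdj C1 C2 V1 V2 A1 A2 φ1 φ2 u v = true ↔
          ((u ∈ C2 ∧ A2 (φ2 u) v = true) ∨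
           (u ∈ V2 \ φ2 '' (C1 ∪ C2) ∧ A2 u v = true)) := by
        intro u
        rw [glueAdj_eq_true]
        constructor
        · rintro (⟨h1,h2,h3⟩|⟨h1,h2,h3⟩|⟨h1,h2,h3⟩|⟨h1,h2,h3⟩|⟨h1,h2,h3⟩|⟨h1,h2,h3⟩|⟨h1,h2,h3⟩)
          · exact absurd h2 hvnC
          · exact absurd h2.1 hvnV1
          · exact Or.inr ⟨h1, h3⟩
          · exact absurd h2.1 hvnV1
          · exact absurd h1 (fun hh => hvnC (Or.inl hh))
          · exact Or.inl ⟨h1, h3⟩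
          · exact absurd h1 (fun hh => hvnC (Or.inr hh))
        · rintro (⟨h1,h2⟩|⟨h1,h2⟩)
          · exact Or.inr (Or.inr (Or.inr (Or.inr (Or.inr (Or.inl ⟨h1, hv2, h2⟩)))))
          · exact Or.inr (Or.inr (Or.inl ⟨h1, hv2, h2⟩))
      have hinj : ∀ u1 u2, glueAdj C1 C2 V1 V2 A1 A2 φ1 φ2 u1 v = true →
          glueAdj C1 C2 V1 V2 A1 A2 φ1 φ2 u2 v = true →
          glueβ (C1 ∪ C2) φ2 u1 = glueβ (C1 ∪ C2) φ2 u2 → u1 = u2 := by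
        intro u1 u2 h1 h2 heq
        rcases (hchar u1).mp h1 with ⟨hu1, _⟩ | ⟨hu1, _⟩ <;>
          rcases (hchar u2).mp h2 with ⟨hu2, _⟩ | ⟨hu2, _⟩
        · rw [glueβ_mem _ _ (Set.mem_union_right _ hu1), glueβ_mem _ _ (Set.mem_union_right _ hu2)] at heq
          exact hφ2inj (Or.inr hu1) (Or.inr hu2) heq
        · rw [glueβ_mem _ _ (Set.mem_union_right _ hu1), glueβ_not _ _ (hnCV2 u2 hu2.1)] at heq
          exact absurd (by rw [← heq]; exact Set.mem_image_of_mem φ2 (Or.inr hu1)) hu2.2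
        · rw [glueβ_not _ _ (hnCV2 u1 hu1.1), glueβ_mem _ _ (Set.mem_union_right _ hu2)] at heq
          exact absurd (by rw [heq]; exact Set.mem_image_of_mem φ2 (Or.inr hu2)) hu1.2
        · rw [glueβ_not _ _ (hnCV2 u1 hu1.1), glueβ_not _ _ (hnCV2 u2 hu2.1)] at heq
          exact heq
      have hmaps : ∀ u, glueAdj C1 C2 V1 V2 A1 A2 φ1 φ2 u v = true →
          A2 (glueβ (C1 ∪ C2) φ2 u) v = true := by
        intro u h
        rcases (hchar u).mp h with ⟨hu, ha⟩ | ⟨hu, ha⟩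
        · rw [glueβ_mem _ _ (Set.mem_union_right _ hu)]; exact ha
        · rw [glueβ_not _ _ (hnCV2 u hu.1)]; exact ha
      have hsurj : ∀ u', A2 u' v = true →
          ∃ u, glueAdj C1 C2 V1 V2 A1 A2 φ1 φ2 u v = true ∧
            glueβ (C1 ∪ C2) φ2 u = u' := by
        intro u' h
        by_cases hI : u' ∈ φ2 '' (C1 ∪ C2)
        · obtain ⟨c, hcC, rfl⟩ := hI
          rcases hcC with hcc1 | hcc2
          · exact absurd (hc c hcc1 v (by rw [hA2symm]; exact h)) hv2.2
          · exact ⟨c, (hchar c).mpr (Or.inl ⟨hcc2, h⟩), glueβ_mem _ _ (Set.mem_union_right _ hcc2)⟩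
        · have hu'V2 : u' ∈ V2 := (hA2supp _ _ h).1
          exact ⟨u', (hchar u').mpr (Or.inr ⟨⟨hu'V2, hI⟩, h⟩),
            glueβ_not _ _ (hnCV2 _ hu'V2)⟩
      have hedge : ∀ u, glueAdj C1 C2 V1 V2 A1 A2 φ1 φ2 u v = true →
          glueEdge C1 C2 V2 φ1 φ2 edge1 edge2 u v
            = edge2 (glueβ (C1 ∪ C2) φ2 u) v := by
        intro u h
        rcases (hchar u).mp h with ⟨hu, _⟩ | ⟨hu, _⟩
        · rw [glueβ_mem _ _ (Set.mem_union_right _ hu)]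
          unfold glueEdge
          rw [if_neg (fun hh => hvnC hh.2), if_neg (fun hh => h12 u hh.1 hu),
            if_neg (fun hh => hvnC (Or.inl hh.1)), if_pos ⟨hu, hvnC⟩]
        · have huC : u ∉ C1 ∪ C2 := hnCV2 u hu.1
          rw [glueβ_not _ _ huC]
          unfold glueEdge
          rw [if_neg (fun hh => huC hh.1), if_neg (fun hh => huC (Or.inl hh.1)),
            if_neg (fun hh => hvnC (Or.inl hh.1)), if_neg (fun hh => huC (Or.inr hh.1)),
            if_neg (fun hh => hvnC (Or.inr hh.1)), if_pos ⟨hu.1, hv2.1⟩]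
      refine ⟨?_, Or.inr ⟨v, hv2.1, ?_, ?_⟩⟩
      · intro x
        have hM := key_multiset
          (fun u => glueAdj C1 C2 V1 V2 A1 A2 φ1 φ2 u v = true)
          (fun u => A2 u v = true)
          (glueβ (C1 ∪ C2) φ2)
          (fun u => glueEdge C1 C2 V2 φ1 φ2 edge1 edge2 u v (x u))
          (fun u => edge2 u v (ρ2' x u))
          hinj hmaps hsurj
          (fun u hu => by
            show glueEdge C1 C2 V2 φ1 φ2 edge1 edge2 u v (x u)
              = edge2 (glueβ (C1 ∪ C2) φ2 u) v (ρ2' x (glueβ (C1 ∪ C2) φ2 u))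
            rw [hedge u hu]
            rcases (hchar u).mp hu with ⟨huC, _⟩ | ⟨huV, _⟩
            · rw [glueβ_mem _ _ (Set.mem_union_right _ huC), hρ2C x u (Or.inr huC)]
            · rw [glueβ_not _ _ (hnCV2 u huV.1), hρ2o x u huV.2])
        rw [hF'2 x v hv (by rw [hαv]; exact hv2.1)]
        simp only [csanMap]
        rw [hαv, hρ2o x v hv2.2]
        unfold glueLab
        rw [if_neg hvnC, if_neg hvnV1, ← hM]
      · unfold glueLab; rw [if_neg hvnC, if_neg hvnV1]
      · unfold incidentLabels
        exact key_multiset _ _ (glueβ (C1 ∪ C2) φ2) _ _ hinj hmaps hsurj hedge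
  refine ⟨glueAdj C1 C2 V1 V2 A1 A2 φ1 φ2, glueLab C1 C2 V1 φ1 lab1 lab2,
    glueEdge C1 C2 V2 φ1 φ2 edge1 edge2, ?_, ?_, ?_, ?_, ?_, ?_, ?_⟩
  -- symmetry of `A'`
  · intro u w
    simp only [glueAdj, decide_eq_decide]
    constructor <;>
    · rintro (⟨h1,h2,h3⟩|⟨h1,h2,h3⟩|⟨h1,h2,h3⟩|⟨h1,h2,h3⟩|⟨h1,h2,h3⟩|⟨h1,h2,h3⟩|⟨h1,h2,h3⟩)
      · exact Or.inl ⟨h2, h1, by rw [hA1symm]; exact h3⟩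
      · exact Or.inr (Or.inl ⟨h2, h1, by rw [hA1symm]; exact h3⟩)
      · exact Or.inr (Or.inr (Or.inl ⟨h2, h1, by rw [hA2symm]; exact h3⟩))
      · exact Or.inr (Or.inr (Or.inr (Or.inr (Or.inl ⟨h1, h2, h3⟩))))
      · exact Or.inr (Or.inr (Or.inr (Or.inl ⟨h1, h2, h3⟩)))
      · exact Or.inr (Or.inr (Or.inr (Or.inr (Or.inr (Or.inr ⟨h1, h2, h3⟩)))))
      · exact Or.inr (Or.inr (Or.inr (Or.inr (Or.inr (Or.inl ⟨h1, h2, h3⟩)))))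
  -- symmetry of `edge'`
  · exact glueEdge_symm φ1 φ2 edge1 edge2 hC12 hedge1symm hedge2symm
  -- description of the edges
  · intro u w
    exact glueAdj_eq_true C1 C2 V1 V2 A1 A2 φ1 φ2 u w
  -- vertex labels
  · intro v hv
    have hv' := hv
    rw [hV'] at hv'
    constructor
    · intro hαV1
      rcases hv' with (hC | hv1) | hv2
      · rcases hC with hc1 | hc2
        · rw [hα1 v hc1]
          unfold glueLab
          rw [if_pos (Set.mem_union_left _ hc1)]
        · exfalso
          have hV2 : α v ∈ V2 := by rw [hα2 v hc2]; exact hφ2maps (Or.inr hc2)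
          exact hnV12 _ hαV1 hV2
      · have hvnC : v ∉ C1 ∪ C2 := hnCV1 v hv1.1
        rw [hα3 v hvnC]
        unfold glueLab
        rw [if_neg hvnC, if_pos hv1.1]
      · exfalso
        have hvnC : v ∉ C1 ∪ C2 := hnCV2 v hv2.1
        rw [hα3 v hvnC] at hαV1
        exact hnV12 v hαV1 hv2.1
    · intro hαV2
      rcases hv' with (hC | hv1) | hv2
      · rcases hC with hc1 | hc2
        · exfalso
          have hV1 : α v ∈ V1 := by rw [hα1 v hc1]; exact hφ1maps (Or.inl hc1)
          exact hnV12 _ hV1 hαV2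
        · rw [hα2 v hc2]
          unfold glueLab
          rw [if_pos (Set.mem_union_right _ hc2)]
          exact haLab v (Or.inr hc2)
      · exfalso
        have hvnC : v ∉ C1 ∪ C2 := hnCV1 v hv1.1
        rw [hα3 v hvnC] at hαV2
        exact hnV12 v hv1.1 hαV2
      · have hvnC : v ∉ C1 ∪ C2 := hnCV2 v hv2.1
        have hvnV1 : v ∉ V1 := fun h => hnV12 v h hv2.1
        rw [hα3 v hvnC]
        unfold glueLab
        rw [if_neg hvnC, if_neg hvnV1]
  -- edge labels
  · intro u w
    refine ⟨?_, ?_, ?_, ?_, ?_⟩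
    · intro hu hw
      unfold glueEdge
      rw [if_pos ⟨hu, hw⟩]
    · intro hu hw
      have hu' : u ∉ C1 ∪ C2 := hnCV1 u hu.1
      have hw' : w ∉ C1 ∪ C2 := hnCV1 w hw.1
      unfold glueEdge
      rw [if_neg (fun h => hu' h.1), if_neg (fun h => hu' (Or.inl h.1)),
        if_neg (fun h => hw' (Or.inl h.1)), if_neg (fun h => hu' (Or.inr h.1)),
        if_neg (fun h => hw' (Or.inr h.1)), if_neg (fun h => hnV12 u hu.1 h.1)]
    · intro hu hw
      have hu' : u ∉ C1 ∪ C2 := hnCV2 u hu.1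
      have hw' : w ∉ C1 ∪ C2 := hnCV2 w hw.1
      unfold glueEdge
      rw [if_neg (fun h => hu' h.1), if_neg (fun h => hu' (Or.inl h.1)),
        if_neg (fun h => hw' (Or.inl h.1)), if_neg (fun h => hu' (Or.inr h.1)),
        if_neg (fun h => hw' (Or.inr h.1)), if_pos ⟨hu.1, hw.1⟩]
    · intro hu hw
      have hw' : w ∉ C1 ∪ C2 := hnCV1 w hw.1
      unfold glueEdge
      rw [if_neg (fun h => hw' h.2), if_pos ⟨hu, hw'⟩]
    · intro hu hw
      have hw' : w ∉ C1 ∪ C2 := hnCV2 w hw.1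
      unfold glueEdge
      rw [if_neg (fun h => hw' h.2), if_neg (fun h => h12 u h.1 hu),
        if_neg (fun h => hw' (Or.inl h.1)), if_pos ⟨hu, hw'⟩]
  -- `F'` is the global map
  · intro x v hvV'
    exact (master v hvV').1 x
  -- every vertex looks like a vertex of `G1` or `G2`
  · intro v hvV'
    exact (master v hvV').2
end
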